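/- arXiv:2410.21927 — 2 statements merged into one kernel-verified Lean document; each statement's English description precedes it below -/
import Mathlib

section
/- Stability of small solutions: Under the standing assumptions, let f ∈ C¹([0,∞)) be convex, increasing, with f(0) > 0 and lim_{s→∞} f(s)/s = +∞, let s₀ > 0 be a maximizer of s ↦ s/f(s) (so f(s₀) = s₀ f'(s₀)), and let λ* be the extremal parameter, which satisfies λ* ≤ λ_m(Ω) s₀/f(s₀). If 0 ≤ λ ≤ λ* and u is a bounded solution of (P(λf)) with u(x) ≤ s₀ for ν-a.e. x ∈ Ω, then u is stable. -/
open MeasureTheory Set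

/-- The `m`-boundary of a set `Ω`. -/
def mBoundary {X : Type*} [MeasurableSpace X] (m : X → MeasureTheory.Measure X)
    (Ω : Set X) : Set X :=
  {x | x ∉ Ω ∧ 0 < m x Ω}

/-- The `m`-closure of a set `Ω`. -/
def mClosure {X : Type*} [MeasurableSpace X] (m : X → MeasureTheory.Measure X)
    (Ω : Set X) : Set X :=
  Ω ∪ mBoundary m Ω

/-- The nonlocal `m`-Laplacian. -/
noncomputable def deltaM {X : Type*} [MeasurableSpace X] (m : X → MeasureTheory.Measure X)
    (u : X → ℝ) (x : X) : ℝ :=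
  ∫ y, (u y - u x) ∂(m x)

/-- `m` is a random walk: each `m x` is a probability measure and `x ↦ m x A` is measurable. -/
def IsRandomWalk {X : Type*} [MeasurableSpace X] (m : X → MeasureTheory.Measure X) : Prop :=
  (∀ x, IsProbabilityMeasure (m x)) ∧
    ∀ A : Set X, MeasurableSet A → Measurable fun x => m x A

/-- `ν` is reversible with respect to the random walk `m`. -/
def Reversible {X : Type*} [MeasurableSpace X] (m : X → MeasureTheory.Measure X)
    (ν : MeasureTheory.Measure X) : Prop :=
  ∀ F : X → X → ℝ, Measurable (Function.uncurry F) → (∃ C, ∀ x y, |F x y| ≤ C) →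
    ∫ x, (∫ y, F x y ∂(m x)) ∂ν = ∫ x, (∫ y, F y x ∂(m x)) ∂ν

/-- `Ω` is `m`-connected with respect to `ν`. -/
def mConnected {X : Type*} [MeasurableSpace X] (m : X → MeasureTheory.Measure X)
    (ν : MeasureTheory.Measure X) (Ω : Set X) : Prop :=
  ∀ A B : Set X, MeasurableSet A → MeasurableSet B → A ⊆ Ω → B ⊆ Ω → A ∪ B = Ω →
    ν A ≠ 0 → ν B ≠ 0 → 0 < ∫ x in A, (m x B).toReal ∂ν

/-- Membership in `L²₀(Ω_m, ν)`: square integrable on `Ω_m`, vanishing `ν`-a.e. on the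
`m`-boundary, extended by `0` outside `Ω_m`. -/
def MemL20 {X : Type*} [MeasurableSpace X] (m : X → MeasureTheory.Measure X)
    (ν : MeasureTheory.Measure X) (Ω : Set X) (u : X → ℝ) : Prop :=
  Measurable u ∧ MeasureTheory.MemLp u 2 (ν.restrict (mClosure m Ω)) ∧
    (∀ᵐ x ∂(ν.restrict (mBoundary m Ω)), u x = 0) ∧ ∀ x ∉ mClosure m Ω, u x = 0

/-- The nonlocal Dirichlet energy `(1/2)∬_{Ω_m×Ω_m} |u(y)-u(x)|² dm_x(y) dν(x)`. -/
noncomputable def gradEnergy {X : Type*} [MeasurableSpace X] (m : X → MeasureTheory.Measure X)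
    (ν : MeasureTheory.Measure X) (Ω : Set X) (u : X → ℝ) : ℝ :=
  (1 / 2) * ∫ x in mClosure m Ω, (∫ y in mClosure m Ω, (u y - u x) ^ 2 ∂(m x)) ∂ν

/-- The standing assumptions of the paper: reversible random walk space, `Ω` `m`-connected with
`0 < ν(Ω) < ν(Ω_m) < ∞`, a 2-Poincaré inequality with first eigenvalue `lam = λ_m(Ω)` attained
by an eigenfunction `φ` with `0 < α ≤ φ ≤ M` a.e. on `Ω` and `φ = 0` on `∂_mΩ`. -/
structure Standing {X : Type*} [MeasurableSpace X] (m : X → MeasureTheory.Measure X)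
    (ν : MeasureTheory.Measure X) (Ω : Set X) (lam : ℝ) (φ : X → ℝ) (α M : ℝ) : Prop where
  hrw : IsRandomWalk m
  hrev : Reversible m ν
  hsigma : MeasureTheory.SigmaFinite ν
  hmeasΩ : MeasurableSet Ω
  hconn : mConnected m ν Ω
  hpos : 0 < ν Ω
  hlt : ν Ω < ν (mClosure m Ω)
  hfin : ν (mClosure m Ω) < ⊤
  hlamPos : 0 < lam
  hpoincare : ∀ u : X → ℝ, MemL20 m ν Ω u →
    lam * ∫ x in Ω, u x ^ 2 ∂ν ≤ gradEnergy m ν Ω u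
  hphiMem : MemL20 m ν Ω φ
  heig : ∀ᵐ x ∂(ν.restrict Ω), -(deltaM m φ x) = lam * φ x
  halphaPos : 0 < α
  halphaM : α ≤ M
  hphiLB : ∀ᵐ x ∂(ν.restrict Ω), α ≤ φ x
  hphiUB : ∀ᵐ x ∂(ν.restrict Ω), φ x ≤ M

/-- Essential boundedness on a set `S` with respect to `ν`. -/
def IsBdd {X : Type*} [MeasurableSpace X] (ν : MeasureTheory.Measure X) (S : Set X)
    (u : X → ℝ) : Prop :=
  ∃ C : ℝ, ∀ᵐ x ∂(ν.restrict S), |u x| ≤ C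

/-- A (nonnegative) solution of the Gelfand-type problem `(P(λ f))`. -/
def IsSol {X : Type*} [MeasurableSpace X] (m : X → MeasureTheory.Measure X)
    (ν : MeasureTheory.Measure X) (Ω : Set X) (lam : ℝ) (f : ℝ → ℝ) (u : X → ℝ) : Prop :=
  MemL20 m ν Ω u ∧ (∀ᵐ x ∂(ν.restrict (mClosure m Ω)), 0 ≤ u x) ∧
    ∀ᵐ x ∂(ν.restrict Ω), -(deltaM m u x) = lam * f (u x)

/-- A solution of `(P(λ f))` without a sign constraint. -/
def IsSolNS {X : Type*} [MeasurableSpace X] (m : X → MeasureTheory.Measure X)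
    (ν : MeasureTheory.Measure X) (Ω : Set X) (lam : ℝ) (f : ℝ → ℝ) (u : X → ℝ) : Prop :=
  MemL20 m ν Ω u ∧ ∀ᵐ x ∂(ν.restrict Ω), -(deltaM m u x) = lam * f (u x)

/-- A minimal solution of `(P(λ f))`. -/
def IsMinimalSol {X : Type*} [MeasurableSpace X] (m : X → MeasureTheory.Measure X)
    (ν : MeasureTheory.Measure X) (Ω : Set X) (lam : ℝ) (f : ℝ → ℝ) (u : X → ℝ) : Prop :=
  IsSol m ν Ω lam f u ∧
    ∀ v : X → ℝ, IsSol m ν Ω lam f v → ∀ᵐ x ∂(ν.restrict (mClosure m Ω)), u x ≤ v x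

/-- The extremal parameter `λ*`. -/
noncomputable def lamStar {X : Type*} [MeasurableSpace X] (m : X → MeasureTheory.Measure X)
    (ν : MeasureTheory.Measure X) (Ω : Set X) (f : ℝ → ℝ) : ℝ :=
  sSup {lam : ℝ | 0 ≤ lam ∧ ∃ u : X → ℝ, IsSol m ν Ω lam f u ∧ IsBdd ν (mClosure m Ω) u}

/-- Hypotheses (H) on the nonlinearity `f` with constant `c₁`. -/
def HypH (f : ℝ → ℝ) (c₁ : ℝ) : Prop :=
  ContinuousOn f (Set.Ici 0) ∧ MonotoneOn f (Set.Ici 0) ∧ 0 < f 0 ∧ 0 < c₁ ∧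
    ∀ s : ℝ, 0 ≤ s → c₁ * s ≤ f s

/-- The stability quadratic form `Q_u(v)` with linearized potential `fp ∘ u` (where `fp = f'`). -/
noncomputable def Qform {X : Type*} [MeasurableSpace X] (m : X → MeasureTheory.Measure X)
    (ν : MeasureTheory.Measure X) (Ω : Set X) (lam : ℝ) (fp : ℝ → ℝ) (u v : X → ℝ) : ℝ :=
  gradEnergy m ν Ω v - lam * ∫ x in Ω, fp (u x) * v x ^ 2 ∂ν

/-- Stability of a solution: `Q_u(v) ≥ 0` for all test functions `v ∈ L^∞ ∩ L²₀`. -/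
def IsStable {X : Type*} [MeasurableSpace X] (m : X → MeasureTheory.Measure X)
    (ν : MeasureTheory.Measure X) (Ω : Set X) (lam : ℝ) (fp : ℝ → ℝ) (u : X → ℝ) : Prop :=
  ∀ v : X → ℝ, MemL20 m ν Ω v → IsBdd ν (mClosure m Ω) v → 0 ≤ Qform m ν Ω lam fp u v

/-- The first eigenvalue `μ₁(u)` of the linearized operator, as an infimum of `Q_u` over
normalized test functions. -/
noncomputable def mu1 {X : Type*} [MeasurableSpace X] (m : X → MeasureTheory.Measure X)
    (ν : MeasureTheory.Measure X) (Ω : Set X) (lam : ℝ) (fp : ℝ → ℝ) (u : X → ℝ) : ℝ :=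
  sInf {r : ℝ | ∃ v : X → ℝ, MemL20 m ν Ω v ∧ (∫ x in Ω, v x ^ 2 ∂ν) = 1 ∧
    r = Qform m ν Ω lam fp u v}

lemma rev_null {X : Type*} [MeasurableSpace X] {m : X → Measure X} {ν : Measure X}
    [SigmaFinite ν]
    (hrw : IsRandomWalk m) (hrev : Reversible m ν) {N : Set X} (hN : MeasurableSet N)
    (hν : ν N = 0) : ∀ᵐ x ∂ν, m x N = 0 := by
  haveI : ∀ x, IsProbabilityMeasure (m x) := hrw.1
  apply ae_of_forall_measure_lt_top_ae_restrict
  intro s hs hsfin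
  set F : X → X → ℝ := fun x y => s.indicator (fun _ => (1:ℝ)) x * N.indicator (fun _ => (1:ℝ)) y
    with hF
  have hFm : Measurable (Function.uncurry F) := by
    exact ((measurable_const.indicator hs).comp measurable_fst).mul
      ((measurable_const.indicator hN).comp measurable_snd)
  have hFb : ∃ C, ∀ x y, |F x y| ≤ C := by
    refine ⟨1, fun x y => ?_⟩
    simp only [hF, Set.indicator]
    split_ifs <;> norm_num
  have hind : ∀ (μ : Measure X) (t : Set X), MeasurableSet t →
      ∫ a, t.indicator (fun _ => (1:ℝ)) a ∂μ = (μ t).toReal := by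
    intro μ t ht; rw [integral_indicator ht]; simp [measureReal_def]
  have key := hrev F hFm hFb
  have hL : ∫ x, (∫ y, F x y ∂(m x)) ∂ν = ∫ x in s, ((m x N).toReal) ∂ν := by
    have h1 : ∀ x, (∫ y, F x y ∂(m x))
        = s.indicator (fun x => (m x N).toReal) x := by
      intro x
      rw [integral_const_mul]
      rw [hind _ _ hN]
      by_cases hx : x ∈ s <;> simp [Set.indicator, hx]
    rw [integral_congr_ae (Filter.Eventually.of_forall h1), integral_indicator hs]
  have hR : ∫ x, (∫ y, F y x ∂(m x)) ∂ν = 0 := by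
    have h1 : ∀ x, (∫ y, F y x ∂(m x))
        = N.indicator (fun x => (m x s).toReal) x := by
      intro x
      simp_rw [hF, mul_comm]
      rw [integral_const_mul, hind _ _ hs]
      by_cases hx : x ∈ N <;> simp [Set.indicator, hx]
    rw [integral_congr_ae (Filter.Eventually.of_forall h1), integral_indicator hN,
      Measure.restrict_eq_zero.mpr hν, integral_zero_measure]
  rw [hL, hR] at key
  have hint : Integrable (fun x => (m x N).toReal) (ν.restrict s) := by
    haveI : IsFiniteMeasure (ν.restrict s) := by
      constructor
      rw [Measure.restrict_apply_univ]; exact hsfin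
    refine Integrable.mono' (integrable_const (1:ℝ))
      ((hrw.2 N hN).ennreal_toReal.aestronglyMeasurable) ?_
    refine Filter.Eventually.of_forall fun x => ?_
    rw [Real.norm_eq_abs, abs_of_nonneg ENNReal.toReal_nonneg]
    exact ENNReal.toReal_le_of_le_ofReal one_pos.le (by simpa using prob_le_one)
  have h0 : ∀ᵐ x ∂(ν.restrict s), (m x N).toReal = 0 :=
    (integral_eq_zero_iff_of_nonneg (fun x => ENNReal.toReal_nonneg) hint).mp key
  filter_upwards [h0] with x hx
  rcases (ENNReal.toReal_eq_zero_iff _).mp hx with h | h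
  · exact h
  · exact absurd h (measure_ne_top _ _)

lemma deltaM_eq_sub {X : Type*} [MeasurableSpace X] {m : X → Measure X}
    (hrw : IsRandomWalk m) {u : X → ℝ} (hu : Measurable u) {Cu : ℝ}
    (hCu : ∀ x, |u x| ≤ Cu) (x : X) :
    deltaM m u x = (∫ y, u y ∂(m x)) - u x := by
  haveI : ∀ z, IsProbabilityMeasure (m z) := hrw.1
  have hint : Integrable u (m x) := by
    refine Integrable.mono' (integrable_const Cu) hu.aestronglyMeasurable ?_
    exact Filter.Eventually.of_forall fun y => by simpa [Real.norm_eq_abs] using hCu y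
  rw [deltaM, integral_sub hint (integrable_const _), integral_const]
  simp

lemma green {X : Type*} [MeasurableSpace X] [MeasurableSpace.CountablyGenerated X]
    {m : X → Measure X} {ν : Measure X}
    (hrw : IsRandomWalk m) (hrev : Reversible m ν)
    {S : Set X} (hS : MeasurableSet S) (hSfin : ν S ≠ ⊤)
    {u φ : X → ℝ} (hu : Measurable u) (hφ : Measurable φ)
    {Cu Cφ : ℝ} (hCφ0 : 0 ≤ Cφ)
    (hCu : ∀ x, |u x| ≤ Cu) (hCφ : ∀ x, |φ x| ≤ Cφ)
    (hu0 : ∀ x ∉ S, u x = 0) (hφ0 : ∀ x ∉ S, φ x = 0) :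
    ∫ x, φ x * deltaM m u x ∂ν = ∫ x, u x * deltaM m φ x ∂ν := by
  haveI : ∀ z, IsProbabilityMeasure (m z) := hrw.1
  set κ : ProbabilityTheory.Kernel X X :=
    ⟨m, Measure.measurable_of_measurable_coe m hrw.2⟩ with hκ
  haveI : ProbabilityTheory.IsMarkovKernel κ := ⟨fun x => hrw.1 x⟩
  set Iu : X → ℝ := fun x => ∫ y, u y ∂(m x) with hIu
  set Iφ : X → ℝ := fun x => ∫ y, φ y ∂(m x) with hIφ
  have hIum : Measurable Iu := by
    have := (MeasureTheory.StronglyMeasurable.integral_kernel_prod_right (κ := κ)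
      (f := fun _ y => u y) ((hu.comp measurable_snd).stronglyMeasurable))
    exact this.measurable
  have hIφm : Measurable Iφ := by
    have := (MeasureTheory.StronglyMeasurable.integral_kernel_prod_right (κ := κ)
      (f := fun _ y => φ y) ((hφ.comp measurable_snd).stronglyMeasurable))
    exact this.measurable
  have hIub : ∀ x, |Iu x| ≤ Cu := by
    intro x
    rw [hIu]
    calc |∫ y, u y ∂(m x)| ≤ Cu * ((m x) Set.univ).toReal := by
          rw [← Real.norm_eq_abs]
          exact norm_integral_le_of_norm_le_const
            (Filter.Eventually.of_forall fun y => by simpa [Real.norm_eq_abs] using hCu y)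
      _ = Cu := by simp
  have hIφb : ∀ x, |Iφ x| ≤ Cφ := by
    intro x
    rw [hIφ]
    calc |∫ y, φ y ∂(m x)| ≤ Cφ * ((m x) Set.univ).toReal := by
          rw [← Real.norm_eq_abs]
          exact norm_integral_le_of_norm_le_const
            (Filter.Eventually.of_forall fun y => by simpa [Real.norm_eq_abs] using hCφ y)
      _ = Cφ := by simp
  have hdom : Integrable (S.indicator fun _ => Cφ * Cu) ν := by
    rw [integrable_indicator_iff hS]
    exact integrableOn_const hSfin
  have hprod : ∀ g1 g2 : X → ℝ, Measurable g1 → Measurable g2 → (∀ x, |g1 x| ≤ Cφ) →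
      (∀ x, |g2 x| ≤ Cu) → (∀ x ∉ S, g1 x = 0 ∨ g2 x = 0) →
      Integrable (fun x => g1 x * g2 x) ν := by
    intro g1 g2 hg1 hg2 hb1 hb2 hvan
    refine Integrable.mono' hdom (hg1.mul hg2).aestronglyMeasurable ?_
    refine Filter.Eventually.of_forall fun x => ?_
    by_cases hx : x ∈ S
    · simp only [Set.indicator_of_mem hx, Real.norm_eq_abs, abs_mul]
      exact mul_le_mul (hb1 x) (hb2 x) (abs_nonneg _) hCφ0
    · rcases hvan x hx with h | h <;>
        simp [Set.indicator_of_notMem hx, Real.norm_eq_abs, h]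
  have hint1 : Integrable (fun x => φ x * Iu x) ν :=
    hprod φ Iu hφ hIum hCφ hIub fun x hx => Or.inl (hφ0 x hx)
  have hint2 : Integrable (fun x => φ x * u x) ν :=
    hprod φ u hφ hu hCφ hCu fun x hx => Or.inl (hφ0 x hx)
  have hint3 : Integrable (fun x => u x * Iφ x) ν := by
    have := hprod Iφ u hIφm hu hIφb hCu fun x hx => Or.inr (hu0 x hx)
    simpa [mul_comm] using this
  have hint4 : Integrable (fun x => u x * φ x) ν := by
    simpa [mul_comm] using hint2
  have hFm : Measurable (Function.uncurry fun x y => φ x * u y) :=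
    (hφ.comp measurable_fst).mul (hu.comp measurable_snd)
  have hrevkey := hrev (fun x y => φ x * u y) hFm
    ⟨Cφ * Cu, fun x y => by
      rw [abs_mul]; exact mul_le_mul (hCφ x) (hCu y) (abs_nonneg _) hCφ0⟩
  have hL : ∫ x, (∫ y, φ x * u y ∂(m x)) ∂ν = ∫ x, φ x * Iu x ∂ν := by
    congr 1; funext x; exact integral_const_mul _ _
  have hR : ∫ x, (∫ y, φ y * u x ∂(m x)) ∂ν = ∫ x, u x * Iφ x ∂ν := by
    congr 1; funext x; rw [mul_comm (u x) (Iφ x), ← integral_mul_const]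
  beta_reduce at hrevkey
  rw [hL, hR] at hrevkey
  calc ∫ x, φ x * deltaM m u x ∂ν
      = ∫ x, (φ x * Iu x - φ x * u x) ∂ν := by
        congr 1; funext x
        rw [deltaM_eq_sub hrw hu hCu x, mul_sub]
    _ = ∫ x, φ x * Iu x ∂ν - ∫ x, φ x * u x ∂ν := integral_sub hint1 hint2
    _ = ∫ x, u x * Iφ x ∂ν - ∫ x, u x * φ x ∂ν := by
        rw [hrevkey]
        congr 1
        congr 1; funext x; ring
    _ = ∫ x, (u x * Iφ x - u x * φ x) ∂ν := (integral_sub hint3 hint4).symm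
    _ = ∫ x, u x * deltaM m φ x ∂ν := by
        congr 1; funext x
        rw [deltaM_eq_sub hrw hφ hCφ x, mul_sub]

lemma fp_nonneg {f : ℝ → ℝ} (hd : DifferentiableOn ℝ f (Set.Ici 0))
    (hmono : MonotoneOn f (Set.Ici 0)) {t : ℝ} (ht : 0 ≤ t) :
    0 ≤ derivWithin f (Set.Ici 0) t := by
  have hdt := (hd t ht).hasDerivWithinAt
  rw [hasDerivWithinAt_iff_tendsto_slope] at hdt
  haveI : (nhdsWithin t (Set.Ici (0:ℝ) \ {t})).NeBot := by
    have hsub : Set.Ioi t ⊆ Set.Ici (0:ℝ) \ {t} := fun y hy =>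
      ⟨le_trans ht (le_of_lt hy), ne_of_gt hy⟩
    exact Filter.NeBot.mono (nhdsGT_neBot t) (nhdsWithin_mono t hsub)
  refine ge_of_tendsto hdt ?_
  filter_upwards [self_mem_nhdsWithin] with y hy
  obtain ⟨hy0, hyt⟩ := hy
  rw [slope_def_field]
  rcases lt_or_gt_of_ne (Ne.symm hyt) with h | h
  · apply div_nonneg
    · simpa using hmono ht hy0 h.le
    · simpa using h.le
  · apply div_nonneg_of_nonpos
    · simpa using hmono hy0 ht h.le
    · simpa using h.le
/-- **Stability of small solutions**: for convex `f` with maximizer `s₀` of `s ↦ s/f(s)`, one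
has `λ* ≤ λ_m(Ω)·s₀/f(s₀)`, and every bounded solution `u` of `(P(λ f))`, `0 ≤ λ ≤ λ*`, with
`u ≤ s₀` a.e. in `Ω` is stable. -/
theorem stability_of_small_solutions
    {X : Type*} [MeasurableSpace X] [MeasurableSpace.CountablyGenerated X]
    (m : X → MeasureTheory.Measure X) (ν : MeasureTheory.Measure X)
    (Ω : Set X) (lam : ℝ) (φ : X → ℝ) (α M : ℝ)
    (hst : Standing m ν Ω lam φ α M)
    (f : ℝ → ℝ) (hC1 : ContDiffOn ℝ 1 f (Set.Ici 0))
    (hconv : ConvexOn ℝ (Set.Ici 0) f)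
    (hmono : MonotoneOn f (Set.Ici 0)) (hf0 : 0 < f 0)
    (hsup : Filter.Tendsto (fun s => f s / s) Filter.atTop Filter.atTop)
    (s₀ : ℝ) (hs₀pos : 0 < s₀)
    (hs₀max : ∀ s : ℝ, 0 ≤ s → s / f s ≤ s₀ / f s₀)
    (hs₀eq : f s₀ = s₀ * derivWithin f (Set.Ici 0) s₀) :
    lamStar m ν Ω f ≤ lam * (s₀ / f s₀) ∧
      ∀ l : ℝ, 0 ≤ l → l ≤ lamStar m ν Ω f →
        ∀ u : X → ℝ, IsSol m ν Ω l f u → IsBdd ν (mClosure m Ω) u →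
          (∀ᵐ x ∂(ν.restrict Ω), u x ≤ s₀) →
          IsStable m ν Ω l (derivWithin f (Set.Ici 0)) u := by
  haveI := hst.hsigma
  have hrw := hst.hrw
  have hrev := hst.hrev
  have hΩ : MeasurableSet Ω := hst.hmeasΩ
  have hBd : MeasurableSet (mBoundary m Ω) := by
    have heq : mBoundary m Ω = Ωᶜ ∩ (fun x => m x Ω) ⁻¹' (Set.Ioi 0) := by
      ext x; simp [mBoundary]
    rw [heq]; exact hΩ.compl.inter ((hrw.2 Ω hΩ) measurableSet_Ioi)
  have hΩm : MeasurableSet (mClosure m Ω) := hΩ.union hBd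
  have hνΩm : ν (mClosure m Ω) ≠ ⊤ := hst.hfin.ne
  have hΩsub : Ω ⊆ mClosure m Ω := Set.subset_union_left
  have hνΩfin : ν Ω < ⊤ := lt_of_le_of_lt (measure_mono hΩsub) hst.hfin
  have hfs0 : 0 < f s₀ :=
    lt_of_lt_of_le hf0 (hmono (Set.mem_Ici.mpr le_rfl) (Set.mem_Ici.mpr hs₀pos.le) hs₀pos.le)
  have hM0 : (0:ℝ) ≤ M := le_trans hst.halphaPos.le hst.halphaM
  have hφ_meas : Measurable φ := hst.hphiMem.1
  -- the key bound on the extremal parameter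
  have key : lamStar m ν Ω f ≤ lam * (s₀ / f s₀) := by
    apply Real.sSup_le
    · rintro t ⟨ht0, w, hsol, hbdd⟩
      rcases eq_or_lt_of_le ht0 with rfl | htpos
      · exact mul_nonneg hst.hlamPos.le (div_nonneg hs₀pos.le hfs0.le)
      obtain ⟨⟨hw_meas, hw_L2, hw_bd0, hw_out⟩, hw_nn, hw_eq⟩ := hsol
      obtain ⟨C, hC⟩ := hbdd
      set C' := max C 0 with hC'def
      have hw_glob : ∀ᵐ x ∂ν, 0 ≤ w x ∧ w x ≤ C' := by
        have h1 := (ae_restrict_iff' hΩm).mp hC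
        have h2 := (ae_restrict_iff' hΩm).mp hw_nn
        filter_upwards [h1, h2] with x hx1 hx2
        by_cases hx : x ∈ mClosure m Ω
        · exact ⟨hx2 hx, le_trans (le_of_abs_le (hx1 hx)) (le_max_left _ _)⟩
        · rw [hw_out x hx]; exact ⟨le_refl _, le_max_right _ _⟩
      have hφ_glob : ∀ᵐ x ∂ν, 0 ≤ φ x ∧ φ x ≤ M := by
        have h1 := (ae_restrict_iff' hΩ).mp hst.hphiLB
        have h2 := (ae_restrict_iff' hΩ).mp hst.hphiUB
        have h3 := (ae_restrict_iff' hBd).mp hst.hphiMem.2.2.1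
        filter_upwards [h1, h2, h3] with x hx1 hx2 hx3
        by_cases hxΩ : x ∈ Ω
        · exact ⟨le_trans hst.halphaPos.le (hx1 hxΩ), hx2 hxΩ⟩
        by_cases hxB : x ∈ mBoundary m Ω
        · rw [hx3 hxB]; exact ⟨le_refl _, hM0⟩
        · rw [hst.hphiMem.2.2.2 x (by
            intro hx
            rcases hx with h | h
            · exact hxΩ h
            · exact hxB h)]
          exact ⟨le_refl _, hM0⟩
      -- pointwise-bounded modifications
      set w' : X → ℝ := fun x => if 0 ≤ w x ∧ w x ≤ C' then w x else 0 with hw'def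
      set φ' : X → ℝ := fun x => if 0 ≤ φ x ∧ φ x ≤ M then φ x else 0 with hφ'def
      have hw'_meas : Measurable w' := by
        apply Measurable.ite _ hw_meas measurable_const
        exact (measurableSet_le measurable_const hw_meas).inter
          (measurableSet_le hw_meas measurable_const)
      have hφ'_meas : Measurable φ' := by
        apply Measurable.ite _ hφ_meas measurable_const
        exact (measurableSet_le measurable_const hφ_meas).inter
          (measurableSet_le hφ_meas measurable_const)
      have hw'_ub : ∀ x, |w' x| ≤ C' := by
        intro x; rw [hw'def]; dsimp only
        split_ifs with h
        · rw [abs_of_nonneg h.1]; exact h.2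
        · rw [abs_zero]; exact le_max_right C 0
      have hφ'_ub : ∀ x, |φ' x| ≤ M := by
        intro x; rw [hφ'def]; dsimp only
        split_ifs with h
        · rw [abs_of_nonneg h.1]; exact h.2
        · simpa using hM0
      have hw'_ae : ∀ᵐ x ∂ν, w' x = w x := by
        filter_upwards [hw_glob] with x hx; rw [hw'def]; simp only [if_pos hx]
      have hφ'_ae : ∀ᵐ x ∂ν, φ' x = φ x := by
        filter_upwards [hφ_glob] with x hx; rw [hφ'def]; simp only [if_pos hx]
      have hw'_out : ∀ x ∉ mClosure m Ω, w' x = 0 := by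
        intro x hx; rw [hw'def]; dsimp only
        split_ifs with h
        · exact hw_out x hx
        · rfl
      have hφ'_out : ∀ x ∉ mClosure m Ω, φ' x = 0 := by
        intro x hx; rw [hφ'def]; dsimp only
        split_ifs with h
        · exact hst.hphiMem.2.2.2 x hx
        · rfl
      -- a.e. equality of the Laplacians
      have hNw_meas : MeasurableSet {x | ¬ (0 ≤ w x ∧ w x ≤ C')} :=
        ((measurableSet_le measurable_const hw_meas).inter
          (measurableSet_le hw_meas measurable_const)).compl
      have hNφ_meas : MeasurableSet {x | ¬ (0 ≤ φ x ∧ φ x ≤ M)} :=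
        ((measurableSet_le measurable_const hφ_meas).inter
          (measurableSet_le hφ_meas measurable_const)).compl
      have hmw := rev_null hrw hrev hNw_meas (ae_iff.mp hw_glob)
      have hmφ := rev_null hrw hrev hNφ_meas (ae_iff.mp hφ_glob)
      have hΔw : ∀ᵐ x ∂ν, deltaM m w' x = deltaM m w x := by
        filter_upwards [hmw, hw_glob] with x hmx hx
        have hxg : w' x = w x := by rw [hw'def]; simp only [if_pos hx]
        rw [deltaM, deltaM, hxg]
        apply integral_congr_ae
        have hae : ∀ᵐ y ∂(m x), 0 ≤ w y ∧ w y ≤ C' := by rw [ae_iff]; exact hmx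
        filter_upwards [hae] with y hy
        rw [hw'def]; simp only [if_pos hy]
      have hΔφ : ∀ᵐ x ∂ν, deltaM m φ' x = deltaM m φ x := by
        filter_upwards [hmφ, hφ_glob] with x hmx hx
        have hxg : φ' x = φ x := by rw [hφ'def]; simp only [if_pos hx]
        rw [deltaM, deltaM, hxg]
        apply integral_congr_ae
        have hae : ∀ᵐ y ∂(m x), 0 ≤ φ y ∧ φ y ≤ M := by rw [ae_iff]; exact hmx
        filter_upwards [hae] with y hy
        rw [hφ'def]; simp only [if_pos hy]
      -- Green's identity
      have hgreen := green hrw hrev hΩm hνΩm hw'_meas hφ'_meas hM0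
        hw'_ub hφ'_ub hw'_out hφ'_out
      -- identify both sides
      have hfeq := (ae_restrict_iff' hΩ).mp hw_eq
      have hgeq := (ae_restrict_iff' hΩ).mp hst.heig
      have hphi0B := (ae_restrict_iff' hBd).mp hst.hphiMem.2.2.1
      have hw0B := (ae_restrict_iff' hBd).mp hw_bd0
      have hLae : ∀ᵐ x ∂ν, φ' x * deltaM m w' x
          = Ω.indicator (fun x => -(t * (φ x * f (w x)))) x := by
        filter_upwards [hΔw, hφ'_ae, hfeq, hphi0B] with x h1 h2 h3 h4
        by_cases hxΩ : x ∈ Ω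
        · rw [Set.indicator_of_mem hxΩ, h1, h2]
          have h5 := h3 hxΩ
          have hΔ : deltaM m w x = -(t * f (w x)) := by linarith
          rw [hΔ]; ring
        · rw [Set.indicator_of_notMem hxΩ]
          by_cases hxB : x ∈ mBoundary m Ω
          · rw [h1, h2, h4 hxB]; ring
          · rw [hφ'_out x (by
              intro hx
              rcases hx with h | h
              · exact hxΩ h
              · exact hxB h)]
            ring
      have hRae : ∀ᵐ x ∂ν, w' x * deltaM m φ' x
          = Ω.indicator (fun x => -(lam * (w x * φ x))) x := by
        filter_upwards [hΔφ, hw'_ae, hgeq, hw0B] with x h1 h2 h3 h4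
        by_cases hxΩ : x ∈ Ω
        · rw [Set.indicator_of_mem hxΩ, h1, h2]
          have h5 := h3 hxΩ
          have hΔ : deltaM m φ x = -(lam * φ x) := by linarith
          rw [hΔ]; ring
        · rw [Set.indicator_of_notMem hxΩ]
          by_cases hxB : x ∈ mBoundary m Ω
          · rw [h1, h2, h4 hxB]; ring
          · rw [hw'_out x (by
              intro hx
              rcases hx with h | h
              · exact hxΩ h
              · exact hxB h)]
            ring
      set K := ∫ x in Ω, φ x * f (w x) ∂ν with hKdef
      set J := ∫ x in Ω, w x * φ x ∂ν with hJdef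
      have hLHS : ∫ x, φ' x * deltaM m w' x ∂ν = -(t * K) := by
        rw [integral_congr_ae hLae, integral_indicator hΩ, integral_neg, integral_const_mul,
          hKdef]
      have hRHS : ∫ x, w' x * deltaM m φ' x ∂ν = -(lam * J) := by
        rw [integral_congr_ae hRae, integral_indicator hΩ, integral_neg, integral_const_mul,
          hJdef]
      have htK : t * K = lam * J := by
        rw [hLHS, hRHS] at hgreen
        linarith
      -- positivity and the tangent-line comparison
      haveI : IsFiniteMeasure (ν.restrict Ω) := by
        constructor
        rw [Measure.restrict_apply_univ]; exact hνΩfin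
      set ftil : ℝ → ℝ := fun s => f (max s 0) with hftil
      have hftil_cont : Continuous ftil :=
        (hC1.continuousOn).comp_continuous (continuous_id.max continuous_const)
          (fun s => Set.mem_Ici.mpr (le_max_right _ _))
      have hw_aeΩ : ∀ᵐ x ∂(ν.restrict Ω), 0 ≤ w x ∧ w x ≤ C' := ae_restrict_of_ae hw_glob
      have hKg : K = ∫ x in Ω, φ x * ftil (w x) ∂ν := by
        apply integral_congr_ae
        filter_upwards [hw_aeΩ] with x hx
        rw [hftil]; dsimp only
        rw [max_eq_left hx.1]
      have hg_int : Integrable (fun x => φ x * ftil (w x)) (ν.restrict Ω) := by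
        refine Integrable.mono' (integrable_const (M * f C'))
          (hφ_meas.mul (hftil_cont.measurable.comp hw_meas)).aestronglyMeasurable ?_
        filter_upwards [hw_aeΩ, ae_restrict_of_ae hφ_glob] with x hx hφx
        have hC'0 : (0:ℝ) ≤ C' := le_max_right _ _
        have hfb : ftil (w x) ≤ f C' := by
          rw [hftil]; dsimp only
          rw [max_eq_left hx.1]
          exact hmono (Set.mem_Ici.mpr hx.1) (Set.mem_Ici.mpr hC'0) hx.2
        have hfnn : 0 ≤ ftil (w x) := by
          rw [hftil]; dsimp only
          exact le_trans hf0.le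
            (hmono (Set.mem_Ici.mpr le_rfl) (Set.mem_Ici.mpr (le_max_right _ _))
              (le_max_right _ _))
        rw [Real.norm_eq_abs, abs_of_nonneg (mul_nonneg hφx.1 hfnn)]
        exact mul_le_mul hφx.2 hfb hfnn hM0
      have hK_pos : 0 < K := by
        have hconst : ∫ _x in Ω, (α * f 0) ∂ν = α * f 0 * (ν Ω).toReal := by
          rw [setIntegral_const, smul_eq_mul, measureReal_def]; ring
        have hlb : α * f 0 * (ν Ω).toReal ≤ ∫ x in Ω, φ x * ftil (w x) ∂ν := by
          rw [← hconst]
          apply integral_mono_ae (integrable_const _) hg_int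
          filter_upwards [hw_aeΩ, hst.hphiLB] with x hx hα
          have hfge : f 0 ≤ ftil (w x) := by
            rw [hftil]; dsimp only
            exact hmono (Set.mem_Ici.mpr le_rfl) (Set.mem_Ici.mpr (le_max_right _ _))
              (le_max_right _ _)
          exact mul_le_mul hα hfge hf0.le (le_trans hst.halphaPos.le hα)
        have hνΩt : 0 < (ν Ω).toReal := ENNReal.toReal_pos hst.hpos.ne' hνΩfin.ne
        rw [hKg]
        exact lt_of_lt_of_le (mul_pos (mul_pos hst.halphaPos hf0) hνΩt) hlb
      have hJK : (f s₀ / s₀) * J ≤ K := by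
        rw [hKg, hJdef, ← integral_const_mul]
        apply integral_mono_of_nonneg
        · filter_upwards [hw_aeΩ, hst.hphiLB] with x hx hα
          have hφnn : 0 ≤ φ x := le_trans hst.halphaPos.le hα
          have := hx.1
          positivity
        · exact hg_int
        · filter_upwards [hw_aeΩ, hst.hphiLB] with x hx hα
          have hφnn : 0 ≤ φ x := le_trans hst.halphaPos.le hα
          have hfwx : ftil (w x) = f (w x) := by
            rw [hftil]; dsimp only; rw [max_eq_left hx.1]
          have hfwpos : 0 < f (w x) :=
            lt_of_lt_of_le hf0
              (hmono (Set.mem_Ici.mpr le_rfl) (Set.mem_Ici.mpr hx.1) hx.1)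
          have h1 : w x * f s₀ ≤ s₀ * f (w x) :=
            (div_le_div_iff₀ hfwpos hfs0).mp (hs₀max (w x) hx.1)
          rw [hfwx, div_mul_eq_mul_div, div_le_iff₀ hs₀pos]
          nlinarith [mul_le_mul_of_nonneg_right h1 hφnn]
      have hJ_pos : 0 < J := by
        nlinarith [hst.hlamPos, hK_pos, htpos, htK]
      have hmain : t * (f s₀ / s₀) ≤ lam := by
        have h1 : t * ((f s₀ / s₀) * J) ≤ t * K := mul_le_mul_of_nonneg_left hJK ht0
        rw [htK] at h1
        have h2 : (t * (f s₀ / s₀)) * J ≤ lam * J := by linarith [h1]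
        exact le_of_mul_le_mul_right h2 hJ_pos
      have hq : 0 < f s₀ / s₀ := div_pos hfs0 hs₀pos
      have heq2 : lam * (s₀ / f s₀) = lam / (f s₀ / s₀) := by
        field_simp
      rw [heq2, le_div_iff₀ hq]
      exact hmain
    · exact mul_nonneg hst.hlamPos.le (div_nonneg hs₀pos.le hfs0.le)
  -- Part 2: stability
  refine ⟨key, ?_⟩
  intro l hl0 hlle u hsol hbdd hus₀
  have hlB : l ≤ lam * (s₀ / f s₀) := le_trans hlle key
  have hdiff : DifferentiableOn ℝ f (Set.Ici 0) := hC1.differentiableOn one_ne_zero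
  have hfpmono : MonotoneOn (derivWithin f (Set.Ici 0)) (Set.Ici 0) :=
    hconv.monotoneOn_derivWithin hdiff
  have hfps₀ : 0 < derivWithin f (Set.Ici 0) s₀ := by
    nlinarith [hfs0, hs₀pos, hs₀eq]
  intro v hv hvb
  show 0 ≤ gradEnergy m ν Ω v - l * ∫ x in Ω, derivWithin f (Set.Ici 0) (u x) * v x ^ 2 ∂ν
  rw [sub_nonneg]
  have hpoin := hst.hpoincare v hv
  have h0u : ∀ᵐ x ∂(ν.restrict Ω), 0 ≤ u x :=
    ae_restrict_of_ae_restrict_of_subset hΩsub hsol.2.1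
  have hv2int : Integrable (fun x => v x ^ 2) (ν.restrict Ω) :=
    (hv.2.1.integrable_sq).mono_measure (Measure.restrict_mono hΩsub le_rfl)
  calc l * ∫ x in Ω, derivWithin f (Set.Ici 0) (u x) * v x ^ 2 ∂ν
      = ∫ x in Ω, l * (derivWithin f (Set.Ici 0) (u x) * v x ^ 2) ∂ν :=
        (integral_const_mul _ _).symm
    _ ≤ ∫ x in Ω, lam * v x ^ 2 ∂ν := by
        apply integral_mono_of_nonneg
        · filter_upwards [h0u] with x hx
          have h1 := fp_nonneg hdiff hmono hx
          have h2 := sq_nonneg (v x)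
          positivity
        · exact hv2int.const_mul lam
        · filter_upwards [h0u, hus₀] with x hx1 hx2
          have hfple : derivWithin f (Set.Ici 0) (u x) ≤ derivWithin f (Set.Ici 0) s₀ :=
            hfpmono (Set.mem_Ici.mpr hx1) (Set.mem_Ici.mpr hs₀pos.le) hx2
          have hlfp : l * derivWithin f (Set.Ici 0) (u x) ≤ lam := by
            calc l * derivWithin f (Set.Ici 0) (u x)
                ≤ l * derivWithin f (Set.Ici 0) s₀ := mul_le_mul_of_nonneg_left hfple hl0
              _ ≤ (lam * (s₀ / f s₀)) * derivWithin f (Set.Ici 0) s₀ :=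
                  mul_le_mul_of_nonneg_right hlB hfps₀.le
              _ = lam := by
                  rw [hs₀eq]
                  field_simp
          calc l * (derivWithin f (Set.Ici 0) (u x) * v x ^ 2)
              = (l * derivWithin f (Set.Ici 0) (u x)) * v x ^ 2 := by ring
            _ ≤ lam * v x ^ 2 := mul_le_mul_of_nonneg_right hlfp (sq_nonneg _)
    _ = lam * ∫ x in Ω, v x ^ 2 ∂ν := integral_const_mul _ _
    _ ≤ gradEnergy m ν Ω v := hpoin
end

section
/- Stability of minimal solutions: Under the standing assumptions, let f ∈ C¹([0,∞)) satisfy hypotheses (H). For every 0 ≤ λ < λ*, the minimal bounded solution u_λ of problem (P(λf)) is stable. Furthermore, if a bounded minimal solution u* of (P(λ* f)) exists, then u* is also stable. -/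
open MeasureTheory Set

/-! ### Auxiliary infrastructure -/

open ProbabilityTheory Filter

namespace Gelfand
set_option linter.unusedSectionVars false

variable {X : Type*} [MeasurableSpace X] {m : X → MeasureTheory.Measure X}
  {ν : MeasureTheory.Measure X} {Ω : Set X}

/-- The random walk as a Markov kernel. -/
noncomputable def kern (m : X → MeasureTheory.Measure X) (hm : IsRandomWalk m) : Kernel X X :=
  ⟨m, MeasureTheory.Measure.measurable_of_measurable_coe m hm.2⟩

lemma measurable_kint (hm : IsRandomWalk m) {H : X → X → ℝ}
    (hH : Measurable (Function.uncurry H)) : Measurable fun x => ∫ y, H x y ∂(m x) := by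
  haveI : IsMarkovKernel (kern m hm) := ⟨fun x => hm.1 x⟩
  exact (MeasureTheory.StronglyMeasurable.integral_kernel_prod_right (κ := kern m hm)
    hH.stronglyMeasurable).measurable

lemma integrable_of_bdd_prob {μ : MeasureTheory.Measure X} [MeasureTheory.IsProbabilityMeasure μ]
    {g : X → ℝ} {c : ℝ} (hg : MeasureTheory.AEStronglyMeasurable g μ) (hc : ∀ x, |g x| ≤ c) :
    MeasureTheory.Integrable g μ :=
  (MeasureTheory.integrable_const c).mono' hg
    (MeasureTheory.ae_of_all _ fun x => by simpa [Real.norm_eq_abs] using hc x)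

lemma integrable_of_bdd_supp {g : X → ℝ} {c : ℝ} {S : Set X}
    (hg : MeasureTheory.AEStronglyMeasurable g ν) (hS : MeasurableSet S) (hfin : ν S ≠ ⊤)
    (hc : ∀ x, |g x| ≤ c) (h0 : ∀ x ∉ S, g x = 0) : MeasureTheory.Integrable g ν := by
  have hsupp : Function.support g ⊆ S := Function.support_subset_iff'.mpr h0
  rw [show g = S.indicator g from (Set.indicator_eq_self.mpr hsupp).symm,
    MeasureTheory.integrable_indicator_iff hS]
  haveI : MeasureTheory.IsFiniteMeasure (ν.restrict S) :=
    ⟨by simpa [MeasureTheory.Measure.restrict_apply_univ] using Ne.lt_top hfin⟩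
  exact (MeasureTheory.integrable_const c).mono' hg.restrict
    (MeasureTheory.ae_of_all _ fun x => by simpa [Real.norm_eq_abs] using hc x)

lemma measurableSet_mBoundary (hm : IsRandomWalk m) (hΩ : MeasurableSet Ω) :
    MeasurableSet (mBoundary m Ω) := by
  have h1 : Measurable fun x => m x Ω := hm.2 Ω hΩ
  have h2 : mBoundary m Ω = Ωᶜ ∩ {x | 0 < m x Ω} := by
    ext x; simp [mBoundary]
  rw [h2]
  exact hΩ.compl.inter (measurableSet_lt measurable_const h1)

lemma measurableSet_mClosure (hm : IsRandomWalk m) (hΩ : MeasurableSet Ω) :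
    MeasurableSet (mClosure m Ω) :=
  hΩ.union (measurableSet_mBoundary hm hΩ)


open MeasureTheory in
lemma indicator_one_abs_le (S : Set X) (x : X) : |S.indicator (1 : X → ℝ) x| ≤ 1 := by
  by_cases hx : x ∈ S <;> simp [Set.indicator_of_mem, Set.indicator_of_notMem, hx]

open MeasureTheory in
lemma toReal_le_one {μ : Measure X} [IsProbabilityMeasure μ] (s : Set X) : (μ s).toReal ≤ 1 := by
  have := prob_le_one (μ := μ) (s := s)
  simpa using ENNReal.toReal_mono (by norm_num) this

open MeasureTheory in
lemma null_transport (hm : IsRandomWalk m) (hrev : Reversible m ν) (hΩ : MeasurableSet Ω)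
    (hfin : ν (mClosure m Ω) ≠ ⊤) {N : Set X} (hN : MeasurableSet N) (h0 : ν N = 0) :
    ∀ᵐ x ∂(ν.restrict (mClosure m Ω)), m x N = 0 := by
  classical
  set S := mClosure m Ω with hS
  have hSm : MeasurableSet S := measurableSet_mClosure hm hΩ
  set F : X → X → ℝ := fun x y => S.indicator 1 x * N.indicator 1 y with hF
  have hFm : Measurable (Function.uncurry F) :=
    ((measurable_one.indicator hSm).comp measurable_fst).mul
      ((measurable_one.indicator hN).comp measurable_snd)
  have key := hrev F hFm ⟨1, fun x y => by
    rw [abs_mul]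
    calc |S.indicator 1 x| * |N.indicator 1 y| ≤ 1 * 1 :=
          mul_le_mul (indicator_one_abs_le _ _) (indicator_one_abs_le _ _) (abs_nonneg _)
            zero_le_one
      _ = 1 := by norm_num⟩
  have hL : ∀ x, (∫ y, F x y ∂(m x)) = S.indicator 1 x * (m x N).toReal := by
    intro x
    haveI := hm.1 x
    rw [hF]
    simp only []
    rw [integral_const_mul, integral_indicator_one hN]; rfl
  have hR : ∀ x, (∫ y, F y x ∂(m x)) = (m x S).toReal * N.indicator 1 x := by
    intro x
    haveI := hm.1 x
    simp only [hF]
    rw [integral_mul_const, integral_indicator_one hSm]; rfl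
  simp only [hL, hR] at key
  have hzero : (∫ x, (m x S).toReal * N.indicator 1 x ∂ν) = 0 := by
    refine integral_eq_zero_of_ae ?_
    filter_upwards [measure_eq_zero_iff_ae_notMem.mp h0] with x hx
    simp [Set.indicator_of_notMem hx]
  rw [hzero] at key
  have hnn : 0 ≤ fun x => S.indicator (1 : X → ℝ) x * (m x N).toReal := by
    intro x
    exact mul_nonneg (by by_cases hx : x ∈ S <;>
      simp [Set.indicator_of_mem, Set.indicator_of_notMem, hx]) ENNReal.toReal_nonneg
  have hint : Integrable (fun x => S.indicator (1 : X → ℝ) x * (m x N).toReal) ν := by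
    refine integrable_of_bdd_supp (c := 1) ?_ hSm hfin ?_ ?_
    · exact ((measurable_one.indicator hSm).mul ((hm.2 N hN).ennreal_toReal)).aestronglyMeasurable
    · intro x
      rw [abs_mul]
      calc |S.indicator 1 x| * |(m x N).toReal| ≤ 1 * 1 := by
            refine mul_le_mul (indicator_one_abs_le _ _) ?_ (abs_nonneg _) zero_le_one
            haveI := hm.1 x
            rw [abs_of_nonneg ENNReal.toReal_nonneg]
            exact toReal_le_one N
        _ = 1 := by norm_num
    · intro x hx
      simp [Set.indicator_of_notMem hx]
  have := (integral_eq_zero_iff_of_nonneg hnn hint).mp key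
  rw [ae_restrict_iff' hSm]
  filter_upwards [this] with x hx hxS
  rw [Set.indicator_of_mem hxS] at hx
  simp only [Pi.one_apply, one_mul, Pi.zero_apply] at hx
  have hne : m x N ≠ ⊤ := by haveI := hm.1 x; exact measure_ne_top _ _
  rcases ENNReal.toReal_eq_zero_iff _ |>.mp hx with h | h
  · exact h
  · exact absurd h hne

open MeasureTheory in
lemma closure_mass (hm : IsRandomWalk m) (hrev : Reversible m ν) (hΩ : MeasurableSet Ω)
    (hfin : ν (mClosure m Ω) ≠ ⊤) :
    ∀ᵐ x ∂(ν.restrict Ω), m x (mClosure m Ω) = 1 := by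
  classical
  set S := mClosure m Ω with hS
  have hSm : MeasurableSet S := measurableSet_mClosure hm hΩ
  set F : X → X → ℝ := fun x y => Ω.indicator 1 x * Sᶜ.indicator 1 y with hF
  have hFm : Measurable (Function.uncurry F) :=
    ((measurable_one.indicator hΩ).comp measurable_fst).mul
      ((measurable_one.indicator hSm.compl).comp measurable_snd)
  have key := hrev F hFm ⟨1, fun x y => by
    rw [abs_mul]
    calc |Ω.indicator 1 x| * |Sᶜ.indicator 1 y| ≤ 1 * 1 :=
          mul_le_mul (indicator_one_abs_le _ _) (indicator_one_abs_le _ _) (abs_nonneg _)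
            zero_le_one
      _ = 1 := by norm_num⟩
  have hL : ∀ x, (∫ y, F x y ∂(m x)) = Ω.indicator 1 x * (m x Sᶜ).toReal := by
    intro x
    haveI := hm.1 x
    simp only [hF]
    rw [integral_const_mul, integral_indicator_one hSm.compl]; rfl
  have hR : ∀ x, (∫ y, F y x ∂(m x)) = (m x Ω).toReal * Sᶜ.indicator 1 x := by
    intro x
    haveI := hm.1 x
    simp only [hF]
    rw [integral_mul_const, integral_indicator_one hΩ]; rfl
  simp only [hL, hR] at key
  have hzero : (∫ x, (m x Ω).toReal * Sᶜ.indicator 1 x ∂ν) = 0 := by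
    have : ∀ x, (m x Ω).toReal * Sᶜ.indicator 1 x = 0 := by
      intro x
      by_cases hx : x ∈ Sᶜ
      · have hxS : x ∉ S := hx
        have h1 : x ∉ Ω := fun h => hxS (Set.mem_union_left _ h)
        have h2 : ¬ (0 < m x Ω) := by
          intro hpos
          exact hxS (Set.mem_union_right _ ⟨h1, hpos⟩)
        have : m x Ω = 0 := by
          by_contra hne
          exact h2 (pos_iff_ne_zero.mpr hne)
        simp [this]
      · simp [Set.indicator_of_notMem hx]
    simp only [this, integral_zero]
  rw [hzero] at key
  have hnn : 0 ≤ fun x => Ω.indicator (1 : X → ℝ) x * (m x Sᶜ).toReal := fun x =>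
    mul_nonneg (by by_cases hx : x ∈ Ω <;>
      simp [Set.indicator_of_mem, Set.indicator_of_notMem, hx]) ENNReal.toReal_nonneg
  have hΩfin : ν Ω ≠ ⊤ := by
    intro h
    exact hfin (eq_top_iff.mpr (h ▸ measure_mono (Set.subset_union_left)))
  have hint : Integrable (fun x => Ω.indicator (1 : X → ℝ) x * (m x Sᶜ).toReal) ν := by
    refine integrable_of_bdd_supp (c := 1) ?_ hΩ hΩfin ?_ ?_
    · exact ((measurable_one.indicator hΩ).mul
        ((hm.2 Sᶜ hSm.compl).ennreal_toReal)).aestronglyMeasurable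
    · intro x
      rw [abs_mul]
      calc |Ω.indicator 1 x| * |(m x Sᶜ).toReal| ≤ 1 * 1 := by
            refine mul_le_mul (indicator_one_abs_le _ _) ?_ (abs_nonneg _) zero_le_one
            haveI := hm.1 x
            rw [abs_of_nonneg ENNReal.toReal_nonneg]
            exact toReal_le_one _
        _ = 1 := by norm_num
    · intro x hx
      simp [Set.indicator_of_notMem hx]
  have := (integral_eq_zero_iff_of_nonneg hnn hint).mp key
  rw [ae_restrict_iff' hΩ]
  filter_upwards [this] with x hx hxΩ
  rw [Set.indicator_of_mem hxΩ] at hx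
  simp only [Pi.one_apply, one_mul, Pi.zero_apply] at hx
  haveI := hm.1 x
  have hcompl : m x Sᶜ = 0 := by
    have hne : m x Sᶜ ≠ ⊤ := measure_ne_top _ _
    rcases ENNReal.toReal_eq_zero_iff _ |>.mp hx with h | h
    · exact h
    · exact absurd h hne
  exact (prob_compl_eq_zero_iff hSm).mp hcompl

open MeasureTheory in
lemma inner_meas (hm : IsRandomWalk m) {H : X → X → ℝ} (hHm : Measurable (Function.uncurry H))
    (x : X) : Measurable fun y => H x y :=
  hHm.comp measurable_prodMk_left

open MeasureTheory in
lemma norm_kint_le (hm : IsRandomWalk m) {g : X → ℝ} {c : ℝ} (hc : ∀ y, |g y| ≤ c) (x : X) :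
    |∫ y, g y ∂(m x)| ≤ c := by
  haveI := hm.1 x
  have := norm_integral_le_of_norm_le_const (μ := m x) (f := g) (C := c)
    (ae_of_all _ fun y => by simpa [Real.norm_eq_abs] using hc y)
  simpa [Real.norm_eq_abs, measure_univ] using this

open MeasureTheory in
lemma rev_nonneg (hm : IsRandomWalk m) (hrev : Reversible m ν) {S : Set X}
    (hS : MeasurableSet S) (hfinS : ν S ≠ ⊤) {H : X → X → ℝ}
    (hHm : Measurable (Function.uncurry H)) {c : ℝ} (hc : ∀ x y, |H x y| ≤ c)
    (hsupp1 : ∀ x y, x ∉ S → H x y = 0) (hsupp2 : ∀ x y, y ∉ S → H x y = 0)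
    (hpos : ∀ x y, 0 ≤ H x y + H y x) :
    0 ≤ ∫ x, ∫ y, H x y ∂(m x) ∂ν := by
  have hHTm : Measurable (Function.uncurry fun x y => H y x) := by
    have : (Function.uncurry fun x y => H y x) = (Function.uncurry H) ∘ Prod.swap := rfl
    rw [this]; exact hHm.comp measurable_swap
  have hint : Integrable (fun x => ∫ y, H x y ∂(m x)) ν := by
    refine integrable_of_bdd_supp (c := c) ?_ hS hfinS ?_ ?_
    · exact (measurable_kint hm hHm).aestronglyMeasurable
    · exact fun x => norm_kint_le hm (fun y => hc x y) x
    · intro x hx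
      have : ∀ y, H x y = 0 := fun y => hsupp1 x y hx
      simp [this]
  have hint' : Integrable (fun x => ∫ y, H y x ∂(m x)) ν := by
    refine integrable_of_bdd_supp (c := c) ?_ hS hfinS ?_ ?_
    · exact (measurable_kint hm hHTm).aestronglyMeasurable
    · exact fun x => norm_kint_le hm (fun y => hc y x) x
    · intro x hx
      have : ∀ y, H y x = 0 := fun y => hsupp2 y x hx
      simp [this]
  have key := hrev H hHm ⟨c, hc⟩
  have h2 : (2:ℝ) * ∫ x, ∫ y, H x y ∂(m x) ∂ν = ∫ x, ∫ y, (H x y + H y x) ∂(m x) ∂ν := by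
    rw [two_mul]
    nth_rewrite 2 [key]
    rw [← integral_add hint hint']
    refine integral_congr_ae (ae_of_all _ fun x => ?_)
    haveI := hm.1 x
    show (∫ y, H x y ∂(m x)) + (∫ y, H y x ∂(m x)) = ∫ y, (H x y + H y x) ∂(m x)
    rw [← integral_add]
    · exact integrable_of_bdd_prob (inner_meas hm hHm x).aestronglyMeasurable fun y => hc x y
    · exact integrable_of_bdd_prob (inner_meas hm hHTm x).aestronglyMeasurable fun y => hc y x
  have hnn : 0 ≤ ∫ x, ∫ y, (H x y + H y x) ∂(m x) ∂ν := by
    refine integral_nonneg fun x => integral_nonneg fun y => hpos x y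
  linarith [h2 ▸ hnn]

open MeasureTheory in
/-- Monotone iteration for the sub-solution scheme, capped by `ub`. -/
noncomputable def iter (m : X → MeasureTheory.Measure X) (Ω : Set X) (G : ℝ → ℝ) (c : ℝ)
    (ub : X → ℝ) : ℕ → X → ℝ
  | 0 => fun _ => 0
  | (n+1) => Ω.indicator fun x =>
      min ((∫ y, iter m Ω G c ub n y ∂(m x)) + c * G (iter m Ω G c ub n x)) (ub x)

section Iter

open MeasureTheory

variable {G : ℝ → ℝ} {c Cb : ℝ} {ub : X → ℝ}

lemma iter_nonneg (hG : ∀ s, 0 ≤ G s) (hc : 0 ≤ c) (hub : ∀ x, 0 ≤ ub x) :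
    ∀ n x, 0 ≤ iter m Ω G c ub n x := by
  intro n
  induction n with
  | zero => intro x; simp [iter]
  | succ n ih =>
    intro x
    by_cases hx : x ∈ Ω
    · rw [iter, Set.indicator_of_mem hx]
      refine le_min (add_nonneg (integral_nonneg fun y => ih y) (mul_nonneg hc (hG _))) (hub x)
    · rw [iter, Set.indicator_of_notMem hx]

lemma iter_le_ub (hG : ∀ s, 0 ≤ G s) (hc : 0 ≤ c) (hub : ∀ x, 0 ≤ ub x) :
    ∀ n x, iter m Ω G c ub n x ≤ ub x := by
  intro n x
  cases n with
  | zero => simpa [iter] using hub x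
  | succ n =>
    by_cases hx : x ∈ Ω
    · rw [iter, Set.indicator_of_mem hx]; exact min_le_right _ _
    · rw [iter, Set.indicator_of_notMem hx]; exact hub x

lemma iter_off (n : ℕ) (x : X) (hx : x ∉ Ω) : iter m Ω G c ub n x = 0 := by
  cases n with
  | zero => simp [iter]
  | succ n => rw [iter, Set.indicator_of_notMem hx]

lemma iter_meas (hm : IsRandomWalk m) (hΩ : MeasurableSet Ω) (hG : Continuous G) (hubm : Measurable ub) :
    ∀ n, Measurable (iter m Ω G c ub n) := by
  intro n
  induction n with
  | zero => simpa [iter] using measurable_const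
  | succ n ih =>
    rw [iter]
    refine Measurable.indicator ?_ hΩ
    refine Measurable.min (Measurable.add ?_ ?_) hubm
    · exact measurable_kint hm (ih.comp measurable_snd)
    · exact (hG.measurable.comp ih).const_mul c

lemma iter_mono_n (hm : IsRandomWalk m) (hΩ : MeasurableSet Ω) (hG : Continuous G) (hGm : Monotone G) (hGnn : ∀ s, 0 ≤ G s) (hc : 0 ≤ c)
    (hub : ∀ x, 0 ≤ ub x) (hubm : Measurable ub) (hCb : 0 ≤ Cb) (hubb : ∀ x, ub x ≤ Cb) :
    ∀ n x, iter m Ω G c ub n x ≤ iter m Ω G c ub (n+1) x := by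
  intro n
  induction n with
  | zero =>
    intro x
    have h0 : iter m Ω G c ub 0 x = 0 := by simp [iter]
    rw [h0]
    exact iter_nonneg hGnn hc hub 1 x
  | succ n ih =>
    intro x
    by_cases hx : x ∈ Ω
    · rw [iter, iter, Set.indicator_of_mem hx, Set.indicator_of_mem hx]
      refine min_le_min (add_le_add ?_ ?_) le_rfl
      · refine integral_mono ?_ ?_ fun y => ih y
        · haveI := hm.1 x
          refine integrable_of_bdd_prob ((iter_meas hm hΩ hG hubm n).aestronglyMeasurable) (c := Cb)
            fun y => ?_
          rw [abs_of_nonneg (iter_nonneg hGnn hc hub n y)]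
          exact le_trans (iter_le_ub hGnn hc hub n y) (hubb y)
        · haveI := hm.1 x
          refine integrable_of_bdd_prob ((iter_meas hm hΩ hG hubm (n+1)).aestronglyMeasurable)
            (c := Cb) fun y => ?_
          rw [abs_of_nonneg (iter_nonneg hGnn hc hub (n+1) y)]
          exact le_trans (iter_le_ub hGnn hc hub (n+1) y) (hubb y)
      · exact mul_le_mul_of_nonneg_left (hGm (ih x)) hc
    · rw [iter_off _ _ hx, iter_off _ _ hx]

lemma iter_mono_c {c' : ℝ} (hm : IsRandomWalk m) (hΩ : MeasurableSet Ω) (hG : Continuous G) (hGm : Monotone G) (hGnn : ∀ s, 0 ≤ G s)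
    (hc : 0 ≤ c) (hcc : c ≤ c') (hub : ∀ x, 0 ≤ ub x) (hubm : Measurable ub) (hCb : 0 ≤ Cb)
    (hubb : ∀ x, ub x ≤ Cb) :
    ∀ n x, iter m Ω G c ub n x ≤ iter m Ω G c' ub n x := by
  intro n
  induction n with
  | zero => intro x; simp [iter]
  | succ n ih =>
    intro x
    by_cases hx : x ∈ Ω
    · rw [iter, iter, Set.indicator_of_mem hx, Set.indicator_of_mem hx]
      refine min_le_min (add_le_add ?_ ?_) le_rfl
      · refine integral_mono ?_ ?_ fun y => ih y
        · haveI := hm.1 x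
          refine integrable_of_bdd_prob ((iter_meas hm hΩ hG hubm n).aestronglyMeasurable) (c := Cb)
            fun y => ?_
          rw [abs_of_nonneg (iter_nonneg hGnn hc hub n y)]
          exact le_trans (iter_le_ub hGnn hc hub n y) (hubb y)
        · haveI := hm.1 x
          refine integrable_of_bdd_prob ((iter_meas hm hΩ hG hubm n).aestronglyMeasurable) (c := Cb)
            fun y => ?_
          rw [abs_of_nonneg (iter_nonneg hGnn (le_trans hc hcc) hub n y)]
          exact le_trans (iter_le_ub hGnn (le_trans hc hcc) hub n y) (hubb y)
      · calc c * G (iter m Ω G c ub n x) ≤ c' * G (iter m Ω G c ub n x) :=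
              mul_le_mul_of_nonneg_right hcc (hGnn _)
          _ ≤ c' * G (iter m Ω G c' ub n x) :=
              mul_le_mul_of_nonneg_left (hGm (ih x)) (le_trans hc hcc)
    · rw [iter_off _ _ hx, iter_off _ _ hx]

end Iter

section Limits

open MeasureTheory

variable {s : ℕ → X → ℝ} {ub lb : X → ℝ}

lemma lim_tendsto (hmono : ∀ n x, s n x ≤ s (n+1) x) (hub : ∀ n x, s n x ≤ ub x) (x : X) :
    Tendsto (fun n => s n x) atTop (nhds (⨆ n, s n x)) := by
  refine tendsto_atTop_ciSup (monotone_nat_of_le_succ fun n => hmono n x) ?_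
  exact ⟨ub x, by rintro r ⟨n, rfl⟩; exact hub n x⟩

lemma lim_meas (hmeas : ∀ n, Measurable (s n)) (hmono : ∀ n x, s n x ≤ s (n+1) x)
    (hub : ∀ n x, s n x ≤ ub x) : Measurable fun x => ⨆ n, s n x := by
  refine measurable_of_tendsto_metrizable hmeas ?_
  exact tendsto_pi_nhds.mpr fun x => lim_tendsto hmono hub x

lemma lim_le (hmono : ∀ n x, s n x ≤ s (n+1) x) (hub : ∀ n x, s n x ≤ ub x) (x : X) :
    (⨆ n, s n x) ≤ ub x :=
  ciSup_le fun n => hub n x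

lemma lim_ge (hmono : ∀ n x, s n x ≤ s (n+1) x) (hub : ∀ n x, s n x ≤ ub x) (n : ℕ) (x : X) :
    s n x ≤ ⨆ n, s n x :=
  le_ciSup ⟨ub x, by rintro r ⟨j, rfl⟩; exact hub j x⟩ n

end Limits

open MeasureTheory in
lemma gradEnergy_nonneg' (m : X → MeasureTheory.Measure X) (ν : MeasureTheory.Measure X)
    (Ω : Set X) (u : X → ℝ) : 0 ≤ gradEnergy m ν Ω u := by
  unfold gradEnergy
  exact mul_nonneg (by norm_num)
    (integral_nonneg fun x => integral_nonneg fun y => sq_nonneg _)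

open MeasureTheory in
lemma zero_isSol (f : ℝ → ℝ) : IsSol m ν Ω 0 f (fun _ => 0) := by
  refine ⟨⟨measurable_const, ?_, ae_of_all _ fun x => rfl, fun x _ => rfl⟩,
    ae_of_all _ fun x => le_refl 0, ae_of_all _ fun x => ?_⟩
  · exact MemLp.zero
  · simp [deltaM]

open MeasureTheory in
lemma lamStar_nonneg (f : ℝ → ℝ) : 0 ≤ lamStar m ν Ω f := by
  by_cases hbd : BddAbove {lam : ℝ | 0 ≤ lam ∧ ∃ u : X → ℝ, IsSol m ν Ω lam f u ∧
      IsBdd ν (mClosure m Ω) u}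
  · refine le_csSup hbd ?_
    exact ⟨le_refl 0, fun _ => 0, zero_isSol f, 0, ae_of_all _ fun x => by simp⟩
  · unfold lamStar
    rw [Real.sSup_of_not_bddAbove hbd]

open MeasureTheory in
lemma amgm_aux {a b s t : ℝ} (hs : 0 < s) (ht : 0 < t) :
    0 ≤ (a^2 * t / s - a * b) + (b^2 * s / t - b * a) := by
  have key : 2 * (a * b) ≤ a^2 * t / s + b^2 * s / t := by
    rw [div_add_div _ _ hs.ne' ht.ne', le_div_iff₀ (mul_pos hs ht)]
    nlinarith [sq_nonneg (a * t - b * s)]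
  linarith

set_option maxHeartbeats 2000000 in
open MeasureTheory in
theorem stable_of_minimal {m : X → MeasureTheory.Measure X} {ν : MeasureTheory.Measure X}
    {Ω : Set X} {lam : ℝ} {φ : X → ℝ} {α M : ℝ} (hst : Standing m ν Ω lam φ α M)
    {f : ℝ → ℝ} {c₁ : ℝ} (hH : HypH f c₁) (hC1 : ContDiffOn ℝ 1 f (Set.Ici 0)) {l : ℝ}
    (hl : 0 ≤ l) {u : X → ℝ} (hmin : IsMinimalSol m ν Ω l f u)
    (hb : IsBdd ν (mClosure m Ω) u) :
    IsStable m ν Ω l (derivWithin f (Set.Ici 0)) u := by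
  classical
  rcases eq_or_lt_of_le hl with hl0 | hl0
  · intro v hv hbv
    rw [Qform, ← hl0]
    simpa using gradEnergy_nonneg' m ν Ω v
  -- main case : 0 < l
  obtain ⟨hfc, hfmono, hf0, hc1, hfgrow⟩ := hH
  have hm := hst.hrw
  have hrev := hst.hrev
  have hΩ := hst.hmeasΩ
  set S := mClosure m Ω with hSdef
  have hSm : MeasurableSet S := measurableSet_mClosure hm hΩ
  have hfinS : ν S ≠ ⊤ := hst.hfin.ne
  have hΩsub : Ω ⊆ S := Set.subset_union_left
  have hΩfin : ν Ω ≠ ⊤ := fun h =>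
    hfinS (eq_top_iff.mpr (h ▸ measure_mono hΩsub))
  have hbdry : mBoundary m Ω ⊆ S := Set.subset_union_right
  have hdisj : Disjoint Ω (mBoundary m Ω) := Set.disjoint_left.mpr fun x hx hbx => hbx.1 hx
  have hbm : MeasurableSet (mBoundary m Ω) := measurableSet_mBoundary hm hΩ
  have hrestr : ν.restrict S = ν.restrict Ω + ν.restrict (mBoundary m Ω) :=
    Measure.restrict_union hdisj hbm
  obtain ⟨C0, hC0⟩ := hb
  set Cb := max C0 0 with hCbdef
  have hCb0 : 0 ≤ Cb := le_max_right _ _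
  have hu_meas : Measurable u := hmin.1.1.1
  -- the truncated nonlinearity
  set Fb : ℝ → ℝ := fun s => f (max s 0) with hFbdef
  have hFbc : Continuous Fb :=
    hfc.comp_continuous (continuous_id.max continuous_const) fun x => Set.mem_Ici.mpr (le_max_right _ _)
  have hFbmono : Monotone Fb := fun a b hab =>
    hfmono (Set.mem_Ici.mpr (le_max_right _ _)) (Set.mem_Ici.mpr (le_max_right _ _)) (max_le_max hab le_rfl)
  have hFbnn : ∀ s, 0 ≤ Fb s := fun s =>
    le_trans (mul_nonneg hc1.le (le_max_right _ _)) (hfgrow _ (le_max_right _ _))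
  have hFbeq : ∀ s, 0 ≤ s → Fb s = f s := fun s hs => by
    simp only [hFbdef]; rw [max_eq_left hs]
  -- Lipschitz constant on [0, Cb]
  set Cb' := Cb + 1 with hCb'def
  have hCb'pos : (0:ℝ) < Cb' := by simp only [hCb'def]; linarith
  have hC1' : ContDiffOn ℝ 1 f (Set.Icc 0 Cb') := hC1.mono fun x hx => hx.1
  have hdiff' : DifferentiableOn ℝ f (Set.Icc 0 Cb') := hC1'.differentiableOn one_ne_zero
  have hdc : ContinuousOn (derivWithin f (Set.Icc 0 Cb')) (Set.Icc 0 Cb') :=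
    hC1'.continuousOn_derivWithin (uniqueDiffOn_Icc hCb'pos) le_rfl
  obtain ⟨K0, hK0⟩ := (isCompact_Icc (a := (0:ℝ)) (b := Cb')).exists_bound_of_continuousOn hdc
  set K := max K0 0 with hKdef
  have hKnn : 0 ≤ K := le_max_right _ _
  have hLip : ∀ a b, a ∈ Set.Icc (0:ℝ) Cb → b ∈ Set.Icc (0:ℝ) Cb → |f b - f a| ≤ K * |b - a| := by
    intro a b ha hb
    have hsub : Set.Icc (0:ℝ) Cb ⊆ Set.Icc 0 Cb' := Set.Icc_subset_Icc le_rfl (by linarith)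
    have := Convex.norm_image_sub_le_of_norm_derivWithin_le (C := K) hdiff'
      (fun x hx => le_trans (hK0 x hx) (le_max_left _ _)) (convex_Icc _ _) (hsub ha) (hsub hb)
    simpa [Real.norm_eq_abs] using this
  -- the normalized (pointwise bounded) representative of u
  set A0 : Set X := (Ω ∩ {x | 0 ≤ u x}) ∩ {x | u x ≤ Cb} with hA0def
  have hA0m : MeasurableSet A0 :=
    (hΩ.inter (measurableSet_le measurable_const hu_meas)).inter
      (measurableSet_le hu_meas measurable_const)
  set ut : X → ℝ := A0.indicator u with hutdef
  have hutm : Measurable ut := hu_meas.indicator hA0m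
  have hut0 : ∀ x, 0 ≤ ut x := fun x => by
    by_cases hx : x ∈ A0
    · simp only [hutdef]; rw [Set.indicator_of_mem hx]; exact hx.1.2
    · simp only [hutdef]; rw [Set.indicator_of_notMem hx]
  have hutCb : ∀ x, ut x ≤ Cb := fun x => by
    by_cases hx : x ∈ A0
    · simp only [hutdef]; rw [Set.indicator_of_mem hx]; exact hx.2
    · simp only [hutdef]; rw [Set.indicator_of_notMem hx]; exact hCb0
  have hutoff : ∀ x, x ∉ Ω → ut x = 0 := fun x hx =>
    Set.indicator_of_notMem (fun h => hx h.1.1) _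
  have hutabs : ∀ x, |ut x| ≤ Cb := fun x => by
    rw [abs_of_nonneg (hut0 x)]; exact hutCb x
  -- a.e. equality with u
  have hae_nonneg : ∀ᵐ x ∂ν.restrict S, 0 ≤ u x := hmin.1.2.1
  have hae_bdΩ : ∀ᵐ x ∂ν.restrict Ω, |u x| ≤ C0 :=
    ae_restrict_of_ae_restrict_of_subset hΩsub hC0
  have hae_nonnegΩ := ae_restrict_of_ae_restrict_of_subset hΩsub hae_nonneg
  have huut_Ω : ∀ᵐ x ∂ν.restrict Ω, u x = ut x := by
    filter_upwards [hae_bdΩ, hae_nonnegΩ, ae_restrict_mem hΩ] with x h1 h2 hx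
    have hxA : x ∈ A0 :=
      ⟨⟨hx, h2⟩, le_trans (le_abs_self _) (le_trans h1 (le_max_left _ _))⟩
    simp only [hutdef]; rw [Set.indicator_of_mem hxA]
  have huut_S : ∀ᵐ x ∂ν.restrict S, u x = ut x := by
    rw [show ν.restrict S = ν.restrict Ω + ν.restrict (mBoundary m Ω) from hrestr,
      ae_add_measure_iff]
    refine ⟨huut_Ω, ?_⟩
    filter_upwards [hmin.1.1.2.2.1, ae_restrict_mem hbm] with x h1 hx
    rw [h1, hutoff x hx.1]
  -- the exceptional null set where u and ut differ
  set N0 : Set X := {x | ¬ u x = ut x} with hN0def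
  have hN0m : MeasurableSet N0 := (measurableSet_eq_fun hu_meas hutm).compl
  have hN0S : N0 ⊆ S := by
    intro x hx
    by_contra hxS
    exact hx (by rw [hmin.1.1.2.2.2 x hxS, hutoff x fun h => hxS (hΩsub h)])
  have hN0null : ν N0 = 0 := by
    have h1 : ν.restrict S {x | ¬ u x = ut x} = 0 := huut_S
    rw [Measure.restrict_apply hN0m] at h1
    rwa [Set.inter_eq_self_of_subset_left hN0S] at h1
  have htransN0 : ∀ᵐ x ∂ν.restrict S, m x N0 = 0 :=
    null_transport hm hrev hΩ hfinS hN0m hN0null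
  have htransN0Ω := ae_restrict_of_ae_restrict_of_subset hΩsub htransN0
  have hmass : ∀ᵐ x ∂ν.restrict Ω, m x S = 1 := closure_mass hm hrev hΩ hfinS
  -- the equation satisfied by ut, in fixed-point form
  have hEqu : ∀ᵐ x ∂ν.restrict Ω, ut x = (∫ y, ut y ∂(m x)) + l * Fb (ut x) := by
    filter_upwards [hmin.1.2.2, htransN0Ω, huut_Ω] with x heq htr hux
    haveI := hm.1 x
    have hcong : (fun y => u y - u x) =ᵐ[m x] fun y => ut y - u x := by
      filter_upwards [measure_eq_zero_iff_ae_notMem.mp htr] with y hy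
      have : u y = ut y := not_not.mp hy
      rw [this]
    have hdel : deltaM m u x = (∫ y, ut y ∂(m x)) - u x := by
      rw [deltaM, integral_congr_ae hcong, integral_sub ?_ (integrable_const _), integral_const]
      · simp [measure_univ]
      · exact integrable_of_bdd_prob hutm.aestronglyMeasurable fun y => hutabs y
    rw [hdel, hux] at heq
    rw [hFbeq _ (hut0 x)]
    linarith
  -- the increasing sequence of parameters
  set lk : ℕ → ℝ := fun k => l - l / (k + 2) with hlkdef
  have hlkpos : ∀ k, 0 < lk k := by
    intro k
    have hknn : (0:ℝ) ≤ (k:ℝ) := Nat.cast_nonneg k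
    have h2 : (1:ℝ) < (k:ℝ) + 2 := by linarith
    have := div_lt_self hl0 h2
    simp only [hlkdef]
    linarith
  have hlklt : ∀ k, lk k < l := by
    intro k
    have hknn : (0:ℝ) ≤ (k:ℝ) := Nat.cast_nonneg k
    have hpos : 0 < l / ((k:ℝ) + 2) := div_pos hl0 (by linarith)
    simp only [hlkdef]
    linarith
  have hlkmono : ∀ k, lk k ≤ lk (k+1) := by
    intro k
    have hknn : (0:ℝ) ≤ (k:ℝ) := Nat.cast_nonneg k
    have h1 : l / ((k:ℝ) + 1 + 2) ≤ l / ((k:ℝ) + 2) := by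
      apply div_le_div_of_nonneg_left hl0.le (by linarith) (by linarith)
    simp only [hlkdef]
    push_cast
    linarith
  have hlktend : Tendsto lk atTop (nhds l) := by
    have h1 : Tendsto (fun k : ℕ => l / ((k:ℝ) + 2)) atTop (nhds 0) :=
      Tendsto.div_atTop tendsto_const_nhds
        (Filter.tendsto_atTop_add_const_right _ 2 tendsto_natCast_atTop_atTop)
    have h2 := (tendsto_const_nhds (x := l) (f := atTop (α := ℕ))).sub h1
    simpa using h2
  -- the approximating minimal solutions at parameters lk k
  set It : ℕ → ℕ → X → ℝ := fun k => iter m Ω Fb (lk k) ut with hItdef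
  have hItmeas : ∀ k n, Measurable (It k n) := fun k n => iter_meas hm hΩ hFbc hutm n
  have hItnn : ∀ k n x, 0 ≤ It k n x := fun k n x => iter_nonneg hFbnn (hlkpos k).le hut0 n x
  have hItub : ∀ k n x, It k n x ≤ ut x := fun k n x => iter_le_ub hFbnn (hlkpos k).le hut0 n x
  have hItmono : ∀ k n x, It k n x ≤ It k (n+1) x := fun k n x =>
    iter_mono_n hm hΩ hFbc hFbmono hFbnn (hlkpos k).le hut0 hutm hCb0 hutCb n x
  set V : ℕ → X → ℝ := fun k x => ⨆ n, It k n x with hVdef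
  have hVmeas : ∀ k, Measurable (V k) := fun k =>
    lim_meas (hItmeas k) (hItmono k) (hItub k)
  have hVtendn : ∀ k x, Tendsto (fun n => It k n x) atTop (nhds (V k x)) := fun k x =>
    lim_tendsto (hItmono k) (hItub k) x
  have hVut : ∀ k x, V k x ≤ ut x := fun k x => lim_le (hItmono k) (hItub k) x
  have hV0 : ∀ k x, 0 ≤ V k x := fun k x => by
    have h0 : It k 0 x = 0 := by simp [hItdef, iter]
    have := lim_ge (hItmono k) (hItub k) 0 x
    rwa [h0] at this
  have hVabs : ∀ k x, |V k x| ≤ Cb := fun k x => by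
    rw [abs_of_nonneg (hV0 k x)]; exact le_trans (hVut k x) (hutCb x)
  have hVoff : ∀ k x, x ∉ Ω → V k x = 0 := by
    intro k x hx
    have : ∀ n, It k n x = 0 := fun n => iter_off n x hx
    simp only [hVdef, this, ciSup_const]
  have hVmonok : ∀ k x, V k x ≤ V (k+1) x := by
    intro k x
    refine ciSup_mono ⟨ut x, ?_⟩ fun n =>
      iter_mono_c hm hΩ hFbc hFbmono hFbnn (hlkpos k).le (hlkmono k) hut0 hutm hCb0 hutCb n x
    rintro r ⟨n, rfl⟩
    exact hItub (k+1) n x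
  -- the fixed point equation for V k
  have hVeq : ∀ k, ∀ᵐ x ∂ν.restrict Ω, V k x = (∫ y, V k y ∂(m x)) + lk k * Fb (V k x) := by
    intro k
    filter_upwards [hEqu, ae_restrict_mem hΩ] with x hequ hx
    haveI := hm.1 x
    have hcap : ∀ n, It k (n+1) x
        = (∫ y, It k n y ∂(m x)) + lk k * Fb (It k n x) := by
      intro n
      have : It k (n+1) x = Ω.indicator (fun x =>
          min ((∫ y, It k n y ∂(m x)) + lk k * Fb (It k n x)) (ut x)) x := rfl
      rw [this, Set.indicator_of_mem hx]
      refine min_eq_left ?_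
      have h1 : (∫ y, It k n y ∂(m x)) ≤ ∫ y, ut y ∂(m x) := by
        refine integral_mono ?_ ?_ fun y => hItub k n y
        · exact integrable_of_bdd_prob ((hItmeas k n).aestronglyMeasurable) fun y => by
            rw [abs_of_nonneg (hItnn k n y)]; exact le_trans (hItub k n y) (hutCb y)
        · exact integrable_of_bdd_prob hutm.aestronglyMeasurable fun y => hutabs y
      have h2 : lk k * Fb (It k n x) ≤ l * Fb (ut x) :=
        mul_le_mul (hlklt k).le (hFbmono (hItub k n x)) (hFbnn _) hl0.le
      calc (∫ y, It k n y ∂(m x)) + lk k * Fb (It k n x) ≤ (∫ y, ut y ∂(m x)) + l * Fb (ut x) :=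
            add_le_add h1 h2
        _ = ut x := hequ.symm
    have h1 : Tendsto (fun n => It k (n+1) x) atTop (nhds (V k x)) :=
      (hVtendn k x).comp (tendsto_add_atTop_nat 1)
    have hInt : Tendsto (fun n => ∫ y, It k n y ∂(m x)) atTop (nhds (∫ y, V k y ∂(m x))) := by
      refine tendsto_integral_of_dominated_convergence (fun _ => Cb)
        (fun n => (hItmeas k n).aestronglyMeasurable) (integrable_const Cb)
        (fun n => ae_of_all _ fun y => ?_) (ae_of_all _ fun y => hVtendn k y)
      rw [Real.norm_eq_abs, abs_of_nonneg (hItnn k n y)]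
      exact le_trans (hItub k n y) (hutCb y)
    have h2 : Tendsto (fun n => (∫ y, It k n y ∂(m x)) + lk k * Fb (It k n x)) atTop
        (nhds ((∫ y, V k y ∂(m x)) + lk k * Fb (V k x))) :=
      hInt.add (((hFbc.tendsto _).comp (hVtendn k x)).const_mul _)
    exact tendsto_nhds_unique h1 (Tendsto.congr (fun n => (hcap n).symm) h2)
  -- the limit W of the V k
  set W : X → ℝ := fun x => ⨆ k, V k x with hWdef
  have hWmeas : Measurable W := lim_meas hVmeas hVmonok hVut
  have hWtend : ∀ x, Tendsto (fun k => V k x) atTop (nhds (W x)) := fun x =>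
    lim_tendsto hVmonok hVut x
  have hWut : ∀ x, W x ≤ ut x := fun x => lim_le hVmonok hVut x
  have hW0 : ∀ x, 0 ≤ W x := fun x => le_trans (hV0 0 x) (lim_ge hVmonok hVut 0 x)
  have hWabs : ∀ x, |W x| ≤ Cb := fun x => by
    rw [abs_of_nonneg (hW0 x)]; exact le_trans (hWut x) (hutCb x)
  have hWoff : ∀ x, x ∉ Ω → W x = 0 := by
    intro x hx
    have : ∀ k, V k x = 0 := fun k => hVoff k x hx
    simp only [hWdef, this, ciSup_const]
  have hWeq : ∀ᵐ x ∂ν.restrict Ω, W x = (∫ y, W y ∂(m x)) + l * Fb (W x) := by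
    filter_upwards [ae_all_iff.mpr hVeq] with x hx
    haveI := hm.1 x
    have hInt : Tendsto (fun k => ∫ y, V k y ∂(m x)) atTop (nhds (∫ y, W y ∂(m x))) := by
      refine tendsto_integral_of_dominated_convergence (fun _ => Cb)
        (fun k => (hVmeas k).aestronglyMeasurable) (integrable_const Cb)
        (fun k => ae_of_all _ fun y => ?_) (ae_of_all _ fun y => hWtend y)
      rw [Real.norm_eq_abs]; exact hVabs k y
    have h2 : Tendsto (fun k => (∫ y, V k y ∂(m x)) + lk k * Fb (V k x)) atTop
        (nhds ((∫ y, W y ∂(m x)) + l * Fb (W x))) :=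
      hInt.add (hlktend.mul ((hFbc.tendsto _).comp (hWtend x)))
    exact tendsto_nhds_unique (hWtend x) (Tendsto.congr (fun k => (hx k).symm) h2)
  -- W is a solution, so by minimality W = ut a.e. on Ω
  haveI hfinmS : IsFiniteMeasure (ν.restrict S) :=
    ⟨by rw [Measure.restrict_apply_univ]; exact hst.hfin⟩
  have hWsol : IsSol m ν Ω l f W := by
    refine ⟨⟨hWmeas, ?_, ?_, ?_⟩, ae_of_all _ fun x => hW0 x, ?_⟩
    · exact MemLp.of_bound hWmeas.aestronglyMeasurable Cb
        (ae_of_all _ fun x => by rw [Real.norm_eq_abs]; exact hWabs x)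
    · filter_upwards [ae_restrict_mem hbm] with x hx
      exact hWoff x hx.1
    · intro x hx
      exact hWoff x fun h => hx (hΩsub h)
    · filter_upwards [hWeq] with x hx
      haveI := hm.1 x
      have hdel : deltaM m W x = (∫ y, W y ∂(m x)) - W x := by
        rw [deltaM, integral_sub ?_ (integrable_const _), integral_const]
        · simp [measure_univ]
        · exact integrable_of_bdd_prob hWmeas.aestronglyMeasurable fun y => hWabs y
      rw [hdel]
      rw [hFbeq _ (hW0 x)] at hx
      linarith
  have hWmin : ∀ᵐ x ∂ν.restrict S, u x ≤ W x := hmin.2 W hWsol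
  have hWu : ∀ᵐ x ∂ν.restrict Ω, W x = ut x := by
    filter_upwards [ae_restrict_of_ae_restrict_of_subset hΩsub hWmin, huut_Ω] with x h1 h2
    exact le_antisymm (hWut x) (h2 ▸ h1)
  -- quantitative positivity of the gaps ut - V k on Ω
  set dk : ℕ → ℝ := fun k => (l - lk k) * f 0 with hdkdef
  have hdkpos : ∀ k, 0 < dk k := fun k => mul_pos (by linarith [hlklt k]) hf0
  have hgap : ∀ k, ∀ᵐ x ∂ν.restrict Ω,
      ut x - V k x = (∫ y, (ut y - V k y) ∂(m x)) + (l * Fb (ut x) - lk k * Fb (V k x)) ∧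
      dk k ≤ ut x - V k x := by
    intro k
    filter_upwards [hEqu, hVeq k] with x h1 h2
    haveI := hm.1 x
    have hintu : Integrable ut (m x) :=
      integrable_of_bdd_prob hutm.aestronglyMeasurable fun y => hutabs y
    have hintV : Integrable (V k) (m x) :=
      integrable_of_bdd_prob (hVmeas k).aestronglyMeasurable fun y => hVabs k y
    have heq1 : ut x - V k x
        = (∫ y, (ut y - V k y) ∂(m x)) + (l * Fb (ut x) - lk k * Fb (V k x)) := by
      rw [integral_sub hintu hintV]
      linarith
    refine ⟨heq1, ?_⟩
    have hnn : 0 ≤ ∫ y, (ut y - V k y) ∂(m x) :=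
      integral_nonneg fun y => sub_nonneg.mpr (hVut k y)
    have hgk : dk k ≤ l * Fb (ut x) - lk k * Fb (V k x) := by
      have hA : lk k * Fb (V k x) ≤ lk k * Fb (ut x) :=
        mul_le_mul_of_nonneg_left (hFbmono (hVut k x)) (hlkpos k).le
      have hB : (l - lk k) * f 0 ≤ (l - lk k) * Fb (ut x) := by
        refine mul_le_mul_of_nonneg_left ?_ (by linarith [hlklt k])
        rw [← hFbeq 0 le_rfl]
        exact hFbmono (hut0 x)
      simp only [hdkdef]
      nlinarith
    linarith
  -- Now prove stability
  intro v hv hbv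
  obtain ⟨Cv0, hCv0⟩ := hbv
  set Cv := max Cv0 0 with hCvdef
  have hCvnn : 0 ≤ Cv := le_max_right _ _
  have hv_meas : Measurable v := hv.1
  set vt : X → ℝ := Ω.indicator (fun x => max (min (v x) Cv) (-Cv)) with hvtdef
  have hvtm : Measurable vt := ((hv_meas.min measurable_const).max measurable_const).indicator hΩ
  have hvtabs : ∀ x, |vt x| ≤ Cv := by
    intro x
    by_cases hx : x ∈ Ω
    · simp only [hvtdef]; rw [Set.indicator_of_mem hx, abs_le]
      exact ⟨le_max_right _ _, max_le (min_le_right _ _) (by linarith)⟩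
    · simp only [hvtdef]; rw [Set.indicator_of_notMem hx]; simpa using hCvnn
  have hvtoff : ∀ x, x ∉ Ω → vt x = 0 := fun x hx => Set.indicator_of_notMem hx _
  have hvtsq : ∀ x, vt x ^ 2 ≤ Cv ^ 2 := fun x => by
    nlinarith [hvtabs x, abs_nonneg (vt x), le_abs_self (vt x), neg_abs_le (vt x)]
  have hvv_Ω : ∀ᵐ x ∂ν.restrict Ω, v x = vt x := by
    filter_upwards [ae_restrict_of_ae_restrict_of_subset hΩsub hCv0, ae_restrict_mem hΩ]
      with x h1 hx
    have habs : |v x| ≤ Cv := le_trans h1 (le_max_left _ _)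
    rw [abs_le] at habs
    simp only [hvtdef]
    rw [Set.indicator_of_mem hx, min_eq_left habs.2, max_eq_left habs.1]
  have hvv_S : ∀ᵐ x ∂ν.restrict S, v x = vt x := by
    rw [show ν.restrict S = ν.restrict Ω + ν.restrict (mBoundary m Ω) from hrestr,
      ae_add_measure_iff]
    refine ⟨hvv_Ω, ?_⟩
    filter_upwards [hv.2.2.1, ae_restrict_mem hbm] with x h1 hx
    rw [h1, hvtoff x hx.1]
  set Nv : Set X := {x | ¬ v x = vt x} with hNvdef
  have hNvm : MeasurableSet Nv := (measurableSet_eq_fun hv_meas hvtm).compl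
  have hNvS : Nv ⊆ S := by
    intro x hx
    by_contra hxS
    exact hx (by rw [hv.2.2.2 x hxS, hvtoff x fun h => hxS (hΩsub h)])
  have hNvnull : ν Nv = 0 := by
    have h1 : ν.restrict S {x | ¬ v x = vt x} = 0 := hvv_S
    rw [Measure.restrict_apply hNvm] at h1
    rwa [Set.inter_eq_self_of_subset_left hNvS] at h1
  have htransNv : ∀ᵐ x ∂ν.restrict S, m x Nv = 0 :=
    null_transport hm hrev hΩ hfinS hNvm hNvnull
  -- the normalized gap functions
  set Cb2 : ℕ → ℝ := fun k => Cb + dk k with hCb2def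
  have hCb2pos : ∀ k, 0 < Cb2 k := fun k => by
    simp only [hCb2def]; linarith [hdkpos k, hCb0]
  set wt : ℕ → X → ℝ := fun k => Ω.piecewise
      (fun x => min (max (ut x - V k x) (dk k)) (Cb2 k)) (fun _ => dk k) with hwtdef
  have hwtm : ∀ k, Measurable (wt k) := fun k =>
    Measurable.piecewise hΩ (((hutm.sub (hVmeas k)).max measurable_const).min measurable_const)
      measurable_const
  have hwtlb : ∀ k x, dk k ≤ wt k x := by
    intro k x
    by_cases hx : x ∈ Ω
    · simp only [hwtdef]; rw [Set.piecewise_eq_of_mem _ _ _ hx]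
      exact le_min (le_max_right _ _) (by simp only [hCb2def]; linarith [hCb0])
    · simp only [hwtdef]; rw [Set.piecewise_eq_of_notMem _ _ _ hx]
  have hwtub : ∀ k x, wt k x ≤ Cb2 k := by
    intro k x
    by_cases hx : x ∈ Ω
    · simp only [hwtdef]; rw [Set.piecewise_eq_of_mem _ _ _ hx]; exact min_le_right _ _
    · simp only [hwtdef]; rw [Set.piecewise_eq_of_notMem _ _ _ hx]
      simp only [hCb2def]; linarith [hCb0]
  have hwtpos : ∀ k x, 0 < wt k x := fun k x => lt_of_lt_of_le (hdkpos k) (hwtlb k x)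
  have hwtbdry : ∀ k x, x ∉ Ω → wt k x = dk k := fun k x hx => by
    simp only [hwtdef]; rw [Set.piecewise_eq_of_notMem _ _ _ hx]
  have hwt_eq : ∀ k, ∀ᵐ x ∂ν.restrict Ω, wt k x = ut x - V k x := by
    intro k
    filter_upwards [hgap k, ae_restrict_mem hΩ] with x hx hxΩ
    simp only [hwtdef]
    rw [Set.piecewise_eq_of_mem _ _ _ hxΩ, max_eq_left hx.2, min_eq_left ?_]
    have h1 : ut x - V k x ≤ Cb := by linarith [hutCb x, hV0 k x]
    simp only [hCb2def]; linarith [hdkpos k]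
  set Nw : ℕ → Set X := fun k => Ω ∩ {x | ¬ wt k x = ut x - V k x} with hNwdef
  have hNwm : ∀ k, MeasurableSet (Nw k) := fun k =>
    hΩ.inter (measurableSet_eq_fun (hwtm k) (hutm.sub (hVmeas k))).compl
  have hNwnull : ∀ k, ν (Nw k) = 0 := by
    intro k
    have h1 : ν.restrict Ω {x | wt k x = ut x - V k x}ᶜ = 0 := hwt_eq k
    rw [Measure.restrict_apply (show MeasurableSet {x | wt k x = ut x - V k x}ᶜ from (measurableSet_eq_fun (hwtm k) (hutm.sub (hVmeas k))).compl)] at h1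
    show ν (Ω ∩ {x | ¬ wt k x = ut x - V k x}) = 0
    rw [Set.inter_comm]
    exact h1
  have htransNw : ∀ k, ∀ᵐ x ∂ν.restrict S, m x (Nw k) = 0 := fun k =>
    null_transport hm hrev hΩ hfinS (hNwm k) (hNwnull k)
  obtain ⟨Kf, hKf⟩ := (isCompact_Icc (a := (0:ℝ)) (b := Cb)).exists_bound_of_continuousOn
    hFbc.continuousOn
  have hKfabs : ∀ s, s ∈ Set.Icc (0:ℝ) Cb → |Fb s| ≤ Kf := fun s hs => by
    simpa [Real.norm_eq_abs] using hKf s hs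
  have hKfnn : 0 ≤ Kf := le_trans (abs_nonneg _) (hKfabs 0 ⟨le_rfl, hCb0⟩)
  have irs : ∀ (g : X → ℝ) (c : ℝ), Measurable g → (∀ x, |g x| ≤ c) →
      Integrable g (ν.restrict S) := fun g c hg hc =>
    (integrable_const c).mono' hg.aestronglyMeasurable
      (ae_of_all _ fun x => by simpa [Real.norm_eq_abs] using hc x)
  have hmaink : ∀ k,
      (∫ x in Ω, (lk k * (Fb (ut x) - Fb (V k x)) / wt k x) * vt x ^ 2 ∂ν)
        ≤ gradEnergy m ν Ω v := by
    intro k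
    set g1 : X → ℝ := S.indicator (fun x => vt x ^ 2 / wt k x) with hg1def
    set h1f : X → ℝ := S.indicator (wt k) with hh1def
    set g2 : X → ℝ := S.indicator vt with hg2def
    have hg1m : Measurable g1 := ((hvtm.pow_const 2).div (hwtm k)).indicator hSm
    have hh1m : Measurable h1f := (hwtm k).indicator hSm
    have hg2m : Measurable g2 := hvtm.indicator hSm
    have hg1b : ∀ x, |g1 x| ≤ Cv ^ 2 / dk k := by
      intro x
      by_cases hx : x ∈ S
      · simp only [hg1def]; rw [Set.indicator_of_mem hx,
          abs_of_nonneg (div_nonneg (sq_nonneg _) (hwtpos k x).le)]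
        exact div_le_div₀ (sq_nonneg Cv) (hvtsq x) (hdkpos k) (hwtlb k x)
      · simp only [hg1def]; rw [Set.indicator_of_notMem hx]
        simp only [abs_zero]
        exact div_nonneg (sq_nonneg _) (hdkpos k).le
    have hh1b : ∀ y, |h1f y| ≤ Cb2 k := by
      intro y
      by_cases hy : y ∈ S
      · simp only [hh1def]; rw [Set.indicator_of_mem hy, abs_of_nonneg (hwtpos k y).le]
        exact hwtub k y
      · simp only [hh1def]; rw [Set.indicator_of_notMem hy]; simpa using (hCb2pos k).le
    have hg2b : ∀ x, |g2 x| ≤ Cv := by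
      intro x
      by_cases hx : x ∈ S
      · simp only [hg2def]; rw [Set.indicator_of_mem hx]; exact hvtabs x
      · simp only [hg2def]; rw [Set.indicator_of_notMem hx]; simpa using hCvnn
    -- the ground-state inequality via reversibility
    have hHm : Measurable (Function.uncurry fun x y => g1 x * h1f y - g2 x * g2 y) :=
      ((hg1m.comp measurable_fst).mul (hh1m.comp measurable_snd)).sub
        ((hg2m.comp measurable_fst).mul (hg2m.comp measurable_snd))
    have hHb : ∀ x y, |g1 x * h1f y - g2 x * g2 y| ≤ Cv ^ 2 / dk k * Cb2 k + Cv * Cv := by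
      intro x y
      calc |g1 x * h1f y - g2 x * g2 y| ≤ |g1 x * h1f y| + |g2 x * g2 y| := by
            rw [sub_eq_add_neg]
            simpa using abs_add_le (g1 x * h1f y) (-(g2 x * g2 y))
        _ ≤ Cv ^ 2 / dk k * Cb2 k + Cv * Cv := by
            refine add_le_add ?_ ?_
            · rw [abs_mul]
              exact mul_le_mul (hg1b x) (hh1b y) (abs_nonneg _)
                (div_nonneg (sq_nonneg _) (hdkpos k).le)
            · rw [abs_mul]
              exact mul_le_mul (hg2b x) (hg2b y) (abs_nonneg _) hCvnn
    have hGS : 0 ≤ ∫ x, ∫ y, (g1 x * h1f y - g2 x * g2 y) ∂(m x) ∂ν := by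
      refine rev_nonneg hm hrev hSm hfinS hHm hHb ?_ ?_ ?_
      · intro x y hx
        simp only [hg1def, hg2def, Set.indicator_of_notMem hx]
        ring
      · intro x y hy
        simp only [hh1def, hg2def, Set.indicator_of_notMem hy]
        ring
      · intro x y
        by_cases hx : x ∈ S
        · by_cases hy : y ∈ S
          · simp only [hg1def, hh1def, hg2def, Set.indicator_of_mem hx, Set.indicator_of_mem hy]
            have h := amgm_aux (a := vt x) (b := vt y) (hwtpos k x) (hwtpos k y)
            have e1 : vt x ^ 2 / wt k x * wt k y = vt x ^ 2 * wt k y / wt k x := by ring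
            have e2 : vt y ^ 2 / wt k y * wt k x = vt y ^ 2 * wt k x / wt k y := by ring
            rw [e1, e2]
            linarith
          · simp only [hg1def, hh1def, hg2def, Set.indicator_of_notMem hy]
            ring_nf
            exact le_rfl
        · by_cases hy : y ∈ S
          · simp only [hg1def, hh1def, hg2def, Set.indicator_of_notMem hx]
            ring_nf
            exact le_rfl
          · simp only [hg1def, hh1def, hg2def, Set.indicator_of_notMem hx,
              Set.indicator_of_notMem hy]
            ring_nf
            exact le_rfl
    -- split the double integral
    have hI1m : Measurable fun x => ∫ y, h1f y ∂(m x) :=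
      measurable_kint hm (hh1m.comp measurable_snd)
    have hI2m : Measurable fun x => ∫ y, g2 y ∂(m x) :=
      measurable_kint hm (hg2m.comp measurable_snd)
    have hI1b : ∀ x, |∫ y, h1f y ∂(m x)| ≤ Cb2 k := fun x => norm_kint_le hm hh1b x
    have hI2b : ∀ x, |∫ y, g2 y ∂(m x)| ≤ Cv := fun x => norm_kint_le hm hg2b x
    have hinner : ∀ x, (∫ y, (g1 x * h1f y - g2 x * g2 y) ∂(m x))
        = g1 x * (∫ y, h1f y ∂(m x)) - g2 x * (∫ y, g2 y ∂(m x)) := by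
      intro x
      haveI := hm.1 x
      rw [integral_sub ((integrable_of_bdd_prob hh1m.aestronglyMeasurable hh1b).const_mul _)
        ((integrable_of_bdd_prob hg2m.aestronglyMeasurable hg2b).const_mul _),
        integral_const_mul, integral_const_mul]
    have hintP : Integrable (fun x => g1 x * ∫ y, h1f y ∂(m x)) ν := by
      refine integrable_of_bdd_supp (c := Cv ^ 2 / dk k * Cb2 k)
        (hg1m.mul hI1m).aestronglyMeasurable hSm hfinS (fun x => ?_) (fun x hx => ?_)
      · rw [abs_mul]
        exact mul_le_mul (hg1b x) (hI1b x) (abs_nonneg _)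
          (div_nonneg (sq_nonneg _) (hdkpos k).le)
      · simp only [hg1def, Set.indicator_of_notMem hx, zero_mul]
    have hintR : Integrable (fun x => g2 x * ∫ y, g2 y ∂(m x)) ν := by
      refine integrable_of_bdd_supp (c := Cv * Cv)
        (hg2m.mul hI2m).aestronglyMeasurable hSm hfinS (fun x => ?_) (fun x hx => ?_)
      · rw [abs_mul]
        exact mul_le_mul (hg2b x) (hI2b x) (abs_nonneg _) hCvnn
      · simp only [hg2def, Set.indicator_of_notMem hx, zero_mul]
    have hRP : (∫ x, g2 x * ∫ y, g2 y ∂(m x) ∂ν) ≤ ∫ x, g1 x * ∫ y, h1f y ∂(m x) ∂ν := by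
      have hsplit : (∫ x, ∫ y, (g1 x * h1f y - g2 x * g2 y) ∂(m x) ∂ν)
          = (∫ x, g1 x * ∫ y, h1f y ∂(m x) ∂ν) - ∫ x, g2 x * ∫ y, g2 y ∂(m x) ∂ν := by
        rw [← integral_sub hintP hintR]
        exact integral_congr_ae (ae_of_all _ fun x => hinner x)
      linarith [hsplit ▸ hGS]
    -- the energy identity
    have hJ : ∀ᵐ x ∂ν.restrict S, (∫ y in S, (v y - v x) ^ 2 ∂(m x))
        = (∫ y, S.indicator (fun z => vt z ^ 2) y ∂(m x)) - 2 * (vt x * ∫ y, g2 y ∂(m x))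
          + vt x ^ 2 * (m x S).toReal := by
      filter_upwards [hvv_S, htransNv] with x hvx htr
      haveI := hm.1 x
      have e1 : (∫ y in S, (v y - v x) ^ 2 ∂(m x))
          = ∫ y, S.indicator (fun y => (v y - v x) ^ 2) y ∂(m x) := (integral_indicator hSm).symm
      have e2 : (fun y => S.indicator (fun y => (v y - v x) ^ 2) y)
          =ᵐ[m x] fun y => S.indicator (fun y => (vt y - vt x) ^ 2) y := by
        filter_upwards [measure_eq_zero_iff_ae_notMem.mp htr] with y hy
        by_cases hyS : y ∈ S
        · rw [Set.indicator_of_mem hyS, Set.indicator_of_mem hyS, not_not.mp hy, hvx]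
        · rw [Set.indicator_of_notMem hyS, Set.indicator_of_notMem hyS]
      have e3 : ∀ y, S.indicator (fun y => (vt y - vt x) ^ 2) y
          = S.indicator (fun z => vt z ^ 2) y - 2 * vt x * g2 y
            + vt x ^ 2 * S.indicator 1 y := by
        intro y
        by_cases hyS : y ∈ S
        · simp only [hg2def, Set.indicator_of_mem hyS, Pi.one_apply]; ring
        · simp only [hg2def, Set.indicator_of_notMem hyS]; ring
      have i1 : Integrable (fun y => S.indicator (fun z => vt z ^ 2) y) (m x) := by
        refine integrable_of_bdd_prob (c := Cv ^ 2) ((hvtm.pow_const 2).indicator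
          hSm).aestronglyMeasurable fun y => ?_
        by_cases hy : y ∈ S
        · rw [Set.indicator_of_mem hy, abs_of_nonneg (sq_nonneg _)]; exact hvtsq y
        · rw [Set.indicator_of_notMem hy]; simpa using sq_nonneg Cv
      have i2 : Integrable (fun y => 2 * vt x * g2 y) (m x) :=
        (integrable_of_bdd_prob hg2m.aestronglyMeasurable hg2b).const_mul _
      have i3 : Integrable (fun y => vt x ^ 2 * S.indicator 1 y) (m x) :=
        (integrable_of_bdd_prob (measurable_one.indicator hSm).aestronglyMeasurable
          (c := 1) fun y => indicator_one_abs_le _ _).const_mul _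
      have i12 : Integrable
          (fun y => S.indicator (fun z => vt z ^ 2) y - 2 * vt x * g2 y) (m x) := i1.sub i2
      rw [e1, integral_congr_ae e2, integral_congr_ae (ae_of_all _ e3),
        integral_add i12 i3, integral_sub i1 i2, integral_const_mul, integral_const_mul,
        integral_indicator_one hSm, measureReal_def]
      ring
    have hIam : Measurable fun x => ∫ y, S.indicator (fun z => vt z ^ 2) y ∂(m x) :=
      measurable_kint hm (((hvtm.pow_const 2).indicator hSm).comp measurable_snd)
    have hIab : ∀ x, |∫ y, S.indicator (fun z => vt z ^ 2) y ∂(m x)| ≤ Cv ^ 2 := by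
      intro x
      refine norm_kint_le hm (fun y => ?_) x
      by_cases hy : y ∈ S
      · rw [Set.indicator_of_mem hy, abs_of_nonneg (sq_nonneg _)]; exact hvtsq y
      · rw [Set.indicator_of_notMem hy]; simpa using sq_nonneg Cv
    have hIcm : Measurable fun x => (m x S).toReal := (hm.2 S hSm).ennreal_toReal
    have hIcb : ∀ x, |(m x S).toReal| ≤ 1 := fun x => by
      haveI := hm.1 x
      rw [abs_of_nonneg ENNReal.toReal_nonneg]
      exact toReal_le_one _
    have hE2 : gradEnergy m ν Ω v
        = (1/2) * ((∫ x in S, (∫ y, S.indicator (fun z => vt z ^ 2) y ∂(m x)) ∂ν)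
          - 2 * (∫ x in S, vt x * ∫ y, g2 y ∂(m x) ∂ν)
          + ∫ x in S, vt x ^ 2 * (m x S).toReal ∂ν) := by
      rw [gradEnergy, ← hSdef]
      congr 1
      have jA : Integrable (fun x => ∫ y, S.indicator (fun z => vt z ^ 2) y ∂(m x))
          (ν.restrict S) := irs _ (Cv ^ 2) hIam hIab
      have jB : Integrable (fun x => 2 * (vt x * ∫ y, g2 y ∂(m x))) (ν.restrict S) :=
        (irs (fun x => vt x * ∫ y, g2 y ∂(m x)) (Cv * Cv) (hvtm.mul hI2m) fun x => by
          rw [abs_mul]; exact mul_le_mul (hvtabs x) (hI2b x) (abs_nonneg _) hCvnn).const_mul 2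
      have jC : Integrable (fun x => vt x ^ 2 * (m x S).toReal) (ν.restrict S) := by
        refine irs _ (Cv ^ 2) ((hvtm.pow_const 2).mul hIcm) fun x => ?_
        rw [abs_mul]
        calc |vt x ^ 2| * |(m x S).toReal| ≤ Cv ^ 2 * 1 :=
              mul_le_mul (by rw [abs_of_nonneg (sq_nonneg _)]; exact hvtsq x) (hIcb x)
                (abs_nonneg _) (sq_nonneg _)
          _ = Cv ^ 2 := by ring
      have jAB : Integrable (fun x => (∫ y, S.indicator (fun z => vt z ^ 2) y ∂(m x))
          - 2 * (vt x * ∫ y, g2 y ∂(m x))) (ν.restrict S) := jA.sub jB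
      rw [integral_congr_ae hJ, integral_add jAB jC, integral_sub jA jB, integral_const_mul]
    -- A = B via reversibility
    have hAB : (∫ x in S, (∫ y, S.indicator (fun z => vt z ^ 2) y ∂(m x)) ∂ν)
        = ∫ x in S, vt x ^ 2 * (m x S).toReal ∂ν := by
      have hrevA := hrev (fun x y => S.indicator 1 x * S.indicator (fun z => vt z ^ 2) y)
        (((measurable_one.indicator hSm).comp measurable_fst).mul
          (((hvtm.pow_const 2).indicator hSm).comp measurable_snd))
        ⟨Cv ^ 2, fun x y => by
          rw [abs_mul]
          calc |S.indicator 1 x| * |S.indicator (fun z => vt z ^ 2) y| ≤ 1 * Cv ^ 2 := by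
                refine mul_le_mul (indicator_one_abs_le _ _) ?_ (abs_nonneg _) zero_le_one
                by_cases hy : y ∈ S
                · rw [Set.indicator_of_mem hy, abs_of_nonneg (sq_nonneg _)]; exact hvtsq y
                · rw [Set.indicator_of_notMem hy]; simpa using sq_nonneg Cv
            _ = Cv ^ 2 := one_mul _⟩
      have hL : ∀ x, (∫ y, S.indicator 1 x * S.indicator (fun z => vt z ^ 2) y ∂(m x))
          = S.indicator 1 x * ∫ y, S.indicator (fun z => vt z ^ 2) y ∂(m x) := fun x => by
        haveI := hm.1 x
        rw [integral_const_mul]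
      have hR : ∀ x, (∫ y, S.indicator 1 y * S.indicator (fun z => vt z ^ 2) x ∂(m x))
          = S.indicator (fun z => vt z ^ 2) x * (m x S).toReal := fun x => by
        haveI := hm.1 x
        rw [show (fun y => S.indicator 1 y * S.indicator (fun z => vt z ^ 2) x)
          = fun y => S.indicator (fun z => vt z ^ 2) x * S.indicator 1 y from
            funext fun y => mul_comm _ _, integral_const_mul, integral_indicator_one hSm, measureReal_def]
      simp only [hL, hR] at hrevA
      have hidL : (fun x => S.indicator (1 : X → ℝ) x * ∫ y,
          S.indicator (fun z => vt z ^ 2) y ∂(m x))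
          = S.indicator (fun x => ∫ y, S.indicator (fun z => vt z ^ 2) y ∂(m x)) := by
        funext x
        by_cases hx : x ∈ S <;>
          simp [Set.indicator_of_mem, Set.indicator_of_notMem, hx]
      have hidR : (fun x => S.indicator (fun z => vt z ^ 2) x * (m x S).toReal)
          = S.indicator (fun x => vt x ^ 2 * (m x S).toReal) := by
        funext x
        by_cases hx : x ∈ S <;>
          simp [Set.indicator_of_mem, Set.indicator_of_notMem, hx]
      rw [hidL, hidR, integral_indicator hSm, integral_indicator hSm] at hrevA
      exact hrevA
    -- pointwise lower bound for the energy density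
    have htk : ∀ᵐ x ∂ν.restrict S,
        Ω.indicator (fun x => (lk k * (Fb (ut x) - Fb (V k x)) / wt k x) * vt x ^ 2) x
          ≤ vt x ^ 2 * (m x S).toReal - (vt x ^ 2 / wt k x) * ∫ y, h1f y ∂(m x) := by
      have hmassS : ∀ᵐ x ∂ν.restrict S, x ∈ Ω → m x S = 1 :=
        ae_restrict_of_ae ((ae_restrict_iff' hΩ).mp hmass)
      have hgapS : ∀ᵐ x ∂ν.restrict S, x ∈ Ω →
          (ut x - V k x = (∫ y, (ut y - V k y) ∂(m x))
            + (l * Fb (ut x) - lk k * Fb (V k x)) ∧ dk k ≤ ut x - V k x) :=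
        ae_restrict_of_ae ((ae_restrict_iff' hΩ).mp (hgap k))
      have hwt_eqS : ∀ᵐ x ∂ν.restrict S, x ∈ Ω → wt k x = ut x - V k x :=
        ae_restrict_of_ae ((ae_restrict_iff' hΩ).mp (hwt_eq k))
      filter_upwards [hmassS, hgapS, hwt_eqS, htransNw k] with x h1 h2 h3 h4
      by_cases hxΩ : x ∈ Ω
      · obtain ⟨heqg, _⟩ := h2 hxΩ
        have h3' := h3 hxΩ
        haveI := hm.1 x
        -- compute the integral of h1f
        have hsplit1f : ∀ y, h1f y
            = Ω.indicator (wt k) y + (mBoundary m Ω).indicator (wt k) y := by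
          intro y
          simp only [hh1def]
          rw [show S = Ω ∪ mBoundary m Ω from hSdef]
          rw [Set.indicator_union_of_disjoint hdisj]
        have hintΩwt : Integrable (fun y => Ω.indicator (wt k) y) (m x) := by
          refine integrable_of_bdd_prob ((hwtm k).indicator hΩ).aestronglyMeasurable
            (c := Cb2 k) fun y => ?_
          by_cases hy : y ∈ Ω
          · rw [Set.indicator_of_mem hy, abs_of_nonneg (hwtpos k y).le]; exact hwtub k y
          · rw [Set.indicator_of_notMem hy]; simpa using (hCb2pos k).le
        have hintbwt : Integrable (fun y => (mBoundary m Ω).indicator (wt k) y) (m x) := by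
          refine integrable_of_bdd_prob ((hwtm k).indicator hbm).aestronglyMeasurable
            (c := Cb2 k) fun y => ?_
          by_cases hy : y ∈ mBoundary m Ω
          · rw [Set.indicator_of_mem hy, abs_of_nonneg (hwtpos k y).le]; exact hwtub k y
          · rw [Set.indicator_of_notMem hy]; simpa using (hCb2pos k).le
        have hIa : (∫ y, Ω.indicator (wt k) y ∂(m x))
            = ut x - V k x - (l * Fb (ut x) - lk k * Fb (V k x)) := by
          have c1 : (fun y => Ω.indicator (wt k) y) =ᵐ[m x] fun y => ut y - V k y := by
            filter_upwards [measure_eq_zero_iff_ae_notMem.mp h4] with y hy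
            by_cases hyΩ : y ∈ Ω
            · rw [Set.indicator_of_mem hyΩ]
              exact not_not.mp fun h => hy ⟨hyΩ, h⟩
            · rw [Set.indicator_of_notMem hyΩ, hutoff y hyΩ, hVoff k y hyΩ, sub_zero]
          rw [integral_congr_ae c1]
          linarith [heqg]
        have hIbdry : (∫ y, (mBoundary m Ω).indicator (wt k) y ∂(m x))
            = (m x (mBoundary m Ω)).toReal * dk k := by
          have c2 : ∀ y, (mBoundary m Ω).indicator (wt k) y
              = (mBoundary m Ω).indicator (fun _ => dk k) y := by
            intro y
            by_cases hyb : y ∈ mBoundary m Ω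
            · rw [Set.indicator_of_mem hyb, Set.indicator_of_mem hyb, hwtbdry k y hyb.1]
            · rw [Set.indicator_of_notMem hyb, Set.indicator_of_notMem hyb]
          rw [integral_congr_ae (ae_of_all _ c2), integral_indicator_const _ hbm, smul_eq_mul, measureReal_def]
        have hI1v : (∫ y, h1f y ∂(m x))
            = wt k x - (l * Fb (ut x) - lk k * Fb (V k x))
              + (m x (mBoundary m Ω)).toReal * dk k := by
          rw [integral_congr_ae (ae_of_all _ hsplit1f), integral_add hintΩwt hintbwt, hIa,
            hIbdry, h3']
        have hIc1 : (m x S).toReal = 1 := by rw [h1 hxΩ, ENNReal.toReal_one]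
        have htb : (m x (mBoundary m Ω)).toReal ≤ 1 := toReal_le_one _
        have hgkdk : lk k * (Fb (ut x) - Fb (V k x)) + dk k
            ≤ l * Fb (ut x) - lk k * Fb (V k x) := by
          have hB : (l - lk k) * f 0 ≤ (l - lk k) * Fb (ut x) := by
            refine mul_le_mul_of_nonneg_left ?_ (by linarith [hlklt k])
            rw [← hFbeq 0 le_rfl]
            exact hFbmono (hut0 x)
          simp only [hdkdef]
          nlinarith [hB]
        have hw0pos : 0 < wt k x := hwtpos k x
        have key : lk k * (Fb (ut x) - Fb (V k x))
            ≤ (l * Fb (ut x) - lk k * Fb (V k x)) - (m x (mBoundary m Ω)).toReal * dk k := by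
          have hdd : (m x (mBoundary m Ω)).toReal * dk k ≤ dk k :=
            mul_le_of_le_one_left (hdkpos k).le htb
          linarith
        rw [Set.indicator_of_mem hxΩ, hIc1, hI1v]
        calc (lk k * (Fb (ut x) - Fb (V k x)) / wt k x) * vt x ^ 2
            ≤ (((l * Fb (ut x) - lk k * Fb (V k x))
                - (m x (mBoundary m Ω)).toReal * dk k) / wt k x) * vt x ^ 2 := by
              exact mul_le_mul_of_nonneg_right ((div_le_div_iff_of_pos_right hw0pos).mpr key) (sq_nonneg _)
          _ = vt x ^ 2 * 1 - (vt x ^ 2 / wt k x)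
              * (wt k x - (l * Fb (ut x) - lk k * Fb (V k x))
                + (m x (mBoundary m Ω)).toReal * dk k) := by
              field_simp
              ring
      · rw [Set.indicator_of_notMem hxΩ, hvtoff x hxΩ]
        simp
    -- putting the pieces together
    have hbP : Integrable (fun x => (vt x ^ 2 / wt k x) * ∫ y, h1f y ∂(m x)) (ν.restrict S) := by
      refine irs _ (Cv ^ 2 / dk k * Cb2 k) ((((hvtm.pow_const 2).div (hwtm k))).mul hI1m)
        fun x => ?_
      rw [abs_mul]
      refine mul_le_mul ?_ (hI1b x) (abs_nonneg _) (div_nonneg (sq_nonneg _) (hdkpos k).le)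
      rw [abs_of_nonneg (div_nonneg (sq_nonneg _) (hwtpos k x).le)]
      exact div_le_div₀ (sq_nonneg Cv) (hvtsq x) (hdkpos k) (hwtlb k x)
    have hbB : Integrable (fun x => vt x ^ 2 * (m x S).toReal) (ν.restrict S) := by
      refine irs _ (Cv ^ 2) ((hvtm.pow_const 2).mul hIcm) fun x => ?_
      rw [abs_mul]
      calc |vt x ^ 2| * |(m x S).toReal| ≤ Cv ^ 2 * 1 :=
            mul_le_mul (by rw [abs_of_nonneg (sq_nonneg _)]; exact hvtsq x) (hIcb x)
              (abs_nonneg _) (sq_nonneg _)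
        _ = Cv ^ 2 := by ring
    have hbtk : Integrable (fun x =>
        Ω.indicator (fun x => (lk k * (Fb (ut x) - Fb (V k x)) / wt k x) * vt x ^ 2) x)
        (ν.restrict S) := by
      refine irs _ (l * (Kf + Kf) / dk k * Cv ^ 2)
        ((((((hFbc.measurable.comp hutm).sub
          (hFbc.measurable.comp (hVmeas k))).const_mul (lk k)).div (hwtm k)).mul
            (hvtm.pow_const 2)).indicator hΩ) fun x => ?_
      by_cases hx : x ∈ Ω
      · rw [Set.indicator_of_mem hx, abs_mul, abs_div, abs_mul]
        refine mul_le_mul ?_ ?_ (abs_nonneg _) ?_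
        · refine div_le_div₀ ?_ ?_ (hdkpos k)
            (by rw [abs_of_nonneg (hwtpos k x).le]; exact hwtlb k x)
          · positivity
          · refine mul_le_mul ?_ ?_ (abs_nonneg _) hl0.le
            · rw [abs_of_nonneg (hlkpos k).le]; exact (hlklt k).le
            · calc |Fb (ut x) - Fb (V k x)| ≤ |Fb (ut x)| + |Fb (V k x)| := by
                    rw [sub_eq_add_neg]; simpa using abs_add_le (Fb (ut x)) (-(Fb (V k x)))
                _ ≤ Kf + Kf := add_le_add (hKfabs _ ⟨hut0 x, hutCb x⟩)
                    (hKfabs _ ⟨hV0 k x, le_trans (hVut k x) (hutCb x)⟩)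
        · rw [abs_of_nonneg (sq_nonneg _)]; exact hvtsq x
        · exact div_nonneg (by positivity) (hdkpos k).le
      · rw [Set.indicator_of_notMem hx]
        simp only [abs_zero]
        have : 0 ≤ l * (Kf + Kf) / dk k := div_nonneg (by positivity) (hdkpos k).le
        positivity
    have hge2 : (∫ x in S,
        Ω.indicator (fun x => (lk k * (Fb (ut x) - Fb (V k x)) / wt k x) * vt x ^ 2) x ∂ν)
          ≤ ∫ x in S, (vt x ^ 2 * (m x S).toReal
            - (vt x ^ 2 / wt k x) * ∫ y, h1f y ∂(m x)) ∂ν :=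
      integral_mono_ae hbtk (hbB.sub hbP) htk
    -- identify the pieces
    have hRR : (∫ x, g2 x * ∫ y, g2 y ∂(m x) ∂ν) = ∫ x in S, vt x * ∫ y, g2 y ∂(m x) ∂ν := by
      rw [← integral_indicator hSm]
      refine integral_congr_ae (ae_of_all _ fun x => ?_)
      by_cases hx : x ∈ S <;>
        simp [hg2def, Set.indicator_of_mem, Set.indicator_of_notMem, hx]
    have hPP : (∫ x, g1 x * ∫ y, h1f y ∂(m x) ∂ν)
        = ∫ x in S, (vt x ^ 2 / wt k x) * ∫ y, h1f y ∂(m x) ∂ν := by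
      rw [← integral_indicator hSm]
      refine integral_congr_ae (ae_of_all _ fun x => ?_)
      by_cases hx : x ∈ S <;>
        simp [hg1def, Set.indicator_of_mem, Set.indicator_of_notMem, hx]
    have hsupptk : (∫ x in S,
        Ω.indicator (fun x => (lk k * (Fb (ut x) - Fb (V k x)) / wt k x) * vt x ^ 2) x ∂ν)
          = ∫ x in Ω, (lk k * (Fb (ut x) - Fb (V k x)) / wt k x) * vt x ^ 2 ∂ν := by
      rw [← integral_indicator hSm, ← integral_indicator hΩ]
      refine integral_congr_ae (ae_of_all _ fun x => ?_)
      by_cases hx : x ∈ Ω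
      · rw [Set.indicator_of_mem (hΩsub hx)]
      · rw [Set.indicator_of_notMem hx]
        by_cases hxS : x ∈ S
        · rw [Set.indicator_of_mem hxS, Set.indicator_of_notMem hx]
        · rw [Set.indicator_of_notMem hxS]
    have hBmP : (∫ x in S, (vt x ^ 2 * (m x S).toReal
          - (vt x ^ 2 / wt k x) * ∫ y, h1f y ∂(m x)) ∂ν)
        = (∫ x in S, vt x ^ 2 * (m x S).toReal ∂ν)
          - ∫ x in S, (vt x ^ 2 / wt k x) * ∫ y, h1f y ∂(m x) ∂ν :=
      integral_sub hbB hbP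
    have hEBR : gradEnergy m ν Ω v
        = (∫ x in S, vt x ^ 2 * (m x S).toReal ∂ν)
          - ∫ x in S, vt x * ∫ y, g2 y ∂(m x) ∂ν := by
      rw [hE2, hAB]
      ring
    rw [← hsupptk]
    calc (∫ x in S,
        Ω.indicator (fun x => (lk k * (Fb (ut x) - Fb (V k x)) / wt k x) * vt x ^ 2) x ∂ν)
        ≤ (∫ x in S, vt x ^ 2 * (m x S).toReal ∂ν)
          - ∫ x in S, (vt x ^ 2 / wt k x) * ∫ y, h1f y ∂(m x) ∂ν := by
          rw [← hBmP]; exact hge2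
      _ ≤ (∫ x in S, vt x ^ 2 * (m x S).toReal ∂ν)
          - ∫ x in S, vt x * ∫ y, g2 y ∂(m x) ∂ν := by
          have := hRP
          rw [hRR, hPP] at this
          linarith
      _ = gradEnergy m ν Ω v := hEBR.symm
  -- pass to the limit k → ∞
  set fp := derivWithin f (Set.Ici 0) with hfpdef
  haveI : IsFiniteMeasure (ν.restrict Ω) := ⟨by
    rw [Measure.restrict_apply_univ]; exact Ne.lt_top hΩfin⟩
  have hT : Tendsto (fun k => ∫ x in Ω, (lk k * (Fb (ut x) - Fb (V k x)) / wt k x) * vt x ^ 2 ∂ν)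
      atTop (nhds (∫ x in Ω, (l * fp (ut x)) * vt x ^ 2 ∂ν)) := by
    refine tendsto_integral_of_dominated_convergence (fun _ => l * K * Cv ^ 2) ?_ ?_ ?_ ?_
    · intro k
      exact (((((hFbc.measurable.comp hutm).sub (hFbc.measurable.comp (hVmeas k))).const_mul
        (lk k)).div (hwtm k)).mul (hvtm.pow_const 2)).aestronglyMeasurable
    · exact integrable_const _
    · intro k
      filter_upwards [hwt_eq k, hgap k] with x h1 h2
      rw [Real.norm_eq_abs, abs_mul, abs_div]
      have hpos2 : 0 < ut x - V k x := lt_of_lt_of_le (hdkpos k) h2.2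
      have hw : |wt k x| = ut x - V k x := by
        rw [h1, abs_of_nonneg hpos2.le]
      have hnum : |Fb (ut x) - Fb (V k x)| ≤ K * (ut x - V k x) := by
        rw [hFbeq _ (hut0 x), hFbeq _ (hV0 k x)]
        have hl2 := hLip (V k x) (ut x) ⟨hV0 k x, le_trans (hVut k x) (hutCb x)⟩
          ⟨hut0 x, hutCb x⟩
        rwa [abs_of_nonneg (sub_nonneg.mpr (hVut k x))] at hl2
      calc |lk k * (Fb (ut x) - Fb (V k x))| / |wt k x| * |vt x ^ 2|
          ≤ l * (K * (ut x - V k x)) / (ut x - V k x) * Cv ^ 2 := by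
            refine mul_le_mul ?_ (by rw [abs_of_nonneg (sq_nonneg _)]; exact hvtsq x)
              (abs_nonneg _)
              (div_nonneg (mul_nonneg hl0.le (mul_nonneg hKnn hpos2.le)) hpos2.le)
            rw [hw, abs_mul]
            refine div_le_div₀ (mul_nonneg hl0.le (mul_nonneg hKnn hpos2.le)) ?_ hpos2 le_rfl
            exact mul_le_mul (by rw [abs_of_nonneg (hlkpos k).le]; exact (hlklt k).le) hnum
              (abs_nonneg _) hl0.le
        _ = l * K * Cv ^ 2 := by
            field_simp [hpos2.ne']
    · filter_upwards [hWu, ae_all_iff.mpr fun k => hwt_eq k, ae_all_iff.mpr fun k => hgap k]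
        with x hWx hwtx hgapx
      have hVlt : ∀ k, V k x < ut x := fun k => by linarith [(hgapx k).2, hdkpos k]
      have hVten : Tendsto (fun k => V k x) atTop (nhds (ut x)) := hWx ▸ hWtend x
      have hder : HasDerivWithinAt f (fp (ut x)) (Set.Ici 0) (ut x) :=
        ((hC1.differentiableOn one_ne_zero) (ut x) (hut0 x)).hasDerivWithinAt
      have hslope := hasDerivWithinAt_iff_tendsto_slope.mp hder
      have hseq : Tendsto (fun k => V k x) atTop
          (nhdsWithin (ut x) (Set.Ici 0 \ {ut x})) := by
        rw [tendsto_nhdsWithin_iff]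
        exact ⟨hVten, Filter.Eventually.of_forall fun k =>
          ⟨hV0 k x, fun h => absurd h (ne_of_lt (hVlt k))⟩⟩
      have hs2 : Tendsto (fun k => slope f (ut x) (V k x)) atTop (nhds (fp (ut x))) :=
        hslope.comp hseq
      have hexpr : ∀ k, (lk k * slope f (ut x) (V k x)) * vt x ^ 2
          = (lk k * (Fb (ut x) - Fb (V k x)) / wt k x) * vt x ^ 2 := by
        intro k
        rw [hwtx k, hFbeq _ (hut0 x), hFbeq _ (hV0 k x), slope_def_field]
        have hne : V k x - ut x ≠ 0 := sub_ne_zero.mpr (ne_of_lt (hVlt k))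
        have hne2 : ut x - V k x ≠ 0 := sub_ne_zero.mpr (ne_of_gt (hVlt k))
        field_simp
        ring
      exact Tendsto.congr hexpr ((hlktend.mul hs2).mul_const _)
  have hfinal : (∫ x in Ω, (l * fp (ut x)) * vt x ^ 2 ∂ν) ≤ gradEnergy m ν Ω v :=
    le_of_tendsto hT (Filter.Eventually.of_forall fun k => hmaink k)
  have hident : (∫ x in Ω, fp (u x) * v x ^ 2 ∂ν) = ∫ x in Ω, fp (ut x) * vt x ^ 2 ∂ν := by
    refine integral_congr_ae ?_
    filter_upwards [huut_Ω, hvv_Ω] with x h1 h2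
    rw [h1, h2]
  have hpull : (∫ x in Ω, (l * fp (ut x)) * vt x ^ 2 ∂ν)
      = l * ∫ x in Ω, fp (ut x) * vt x ^ 2 ∂ν := by
    rw [← integral_const_mul]
    exact integral_congr_ae (ae_of_all _ fun x => by ring)
  rw [Qform, hident]
  linarith [hfinal, hpull]

end Gelfand

/-- **Stability of minimal solutions**: for `f ∈ C¹([0,∞))` satisfying hypotheses (H), every
minimal bounded solution `u_λ` of `(P(λ f))` with `0 ≤ λ < λ*` is stable; and a bounded minimal
solution of `(P(λ* f))`, if it exists, is also stable. -/
theorem minimal_solutions_stable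
    {X : Type*} [MeasurableSpace X] [MeasurableSpace.CountablyGenerated X]
    (m : X → MeasureTheory.Measure X) (ν : MeasureTheory.Measure X)
    (Ω : Set X) (lam : ℝ) (φ : X → ℝ) (α M : ℝ)
    (hst : Standing m ν Ω lam φ α M)
    (f : ℝ → ℝ) (c₁ : ℝ) (hH : HypH f c₁)
    (hC1 : ContDiffOn ℝ 1 f (Set.Ici 0)) :
    (∀ l : ℝ, 0 ≤ l → l < lamStar m ν Ω f →
      ∀ u : X → ℝ, IsMinimalSol m ν Ω l f u → IsBdd ν (mClosure m Ω) u →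
        IsStable m ν Ω l (derivWithin f (Set.Ici 0)) u) ∧
    (∀ u : X → ℝ, IsMinimalSol m ν Ω (lamStar m ν Ω f) f u → IsBdd ν (mClosure m Ω) u →
      IsStable m ν Ω (lamStar m ν Ω f) (derivWithin f (Set.Ici 0)) u) := by
  constructor
  · intro l hl _hlt u hmin hb
    exact Gelfand.stable_of_minimal hst hH hC1 hl hmin hb
  · intro u hmin hb
    exact Gelfand.stable_of_minimal hst hH hC1 (Gelfand.lamStar_nonneg f) hmin hb
end
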